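/- arXiv:1504.02892 — 3 statements merged into one kernel-verified Lean document; each statement's English description precedes it below -/
import Mathlib

section
/- Let D be a positive integer and let (G_n) be a sequence of finite graphs with all degrees bounded by D and v(G_n) → ∞. Then (G_n) is left convergent if and only if for every positive integer l and every connected multigraph F with l labeled edges and no isolated vertices (F ∈ 𝓕_l), the limit lim_n i(F,G_n)/v(G_n) exists. -/
open Filter Topology

/-- The maximum degree of `G` is at most `D`. -/
def DegLE {V : Type*} (G : SimpleGraph V) (D : ℕ) : Prop :=
  ∀ v, (G.neighborSet v).ncard ≤ D

/-- `ind F G`: the number of injective maps `V F → V G` that are isomorphisms of `F`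
with the induced subgraph of `G` on the image, i.e. the number of graph embeddings. -/
noncomputable def indCount {α β : Type*} (F : SimpleGraph α) (G : SimpleGraph β) : ℕ :=
  Nat.card (F ↪g G)

/-- Left convergence of a sequence of finite graphs: for every finite connected simple
graph `F`, the quantities `ind(F, G n) / v(G n)` converge. -/
def LeftConvergent (N : ℕ → ℕ) (G : ∀ n, SimpleGraph (Fin (N n))) : Prop :=
  ∀ (m : ℕ) (F : SimpleGraph (Fin m)), F.Connected →
    ∃ L : ℝ, Tendsto (fun n => (indCount F (G n) : ℝ) / (N n : ℝ)) atTop (nhds L)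

/-- `hom(G, H)` for a weighted graph `H` on `Fin k` with vertex weights `w` and
(unordered) pair weights `wE` (every pair, including loops, carries a weight). -/
noncomputable def homW {V : Type*} [Fintype V] (G : SimpleGraph V) {k : ℕ}
    (w : Fin k → ℝ) (wE : Sym2 (Fin k) → ℝ) : ℝ :=
  letI := Classical.decEq V
  letI := Classical.decRel G.Adj
  ∑ f : V → Fin k, (∏ v, w (f v)) * ∏ e ∈ G.edgeFinset, wE (Sym2.map f e)

/-- `t(G, H) = hom(G, H) / v(H) ^ v(G)`. -/
noncomputable def tW {V : Type*} [Fintype V] (G : SimpleGraph V) {k : ℕ}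
    (w : Fin k → ℝ) (wE : Sym2 (Fin k) → ℝ) : ℝ :=
  homW G w wE / (k : ℝ) ^ (Fintype.card V)

/-- `F : Fin l → Sym2 (Fin m)` represents a multigraph with `l` edges labeled by
`Fin l` on the vertex set `Fin m` (edge `p` has endpoint pair `F p`). `GoodMG F`
says that it is a member of `𝓕_l`: it has no isolated vertices, no loops, and is
connected. -/
def GoodMG {l m : ℕ} (F : Fin l → Sym2 (Fin m)) : Prop :=
  (∀ v : Fin m, ∃ p, v ∈ F p) ∧ (∀ p, ¬ (F p).IsDiag) ∧
    (SimpleGraph.fromEdgeSet (Set.range F)).Connected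

/-- `i(F, G)`: the number of sequences `(e 1, …, e l)` of edges of `G` whose induced
edge-labeled multigraph is isomorphic to the edge-labeled multigraph `F` (which has no
isolated vertices), i.e. such that some injection `φ` of the vertices of `F` into `G`
carries edge `p` of `F` to `e p` for every `p`. -/
noncomputable def iCount {l m : ℕ} (F : Fin l → Sym2 (Fin m)) {V : Type*}
    (G : SimpleGraph V) : ℕ :=
  Nat.card {e : Fin l → Sym2 V //
    (∀ p, e p ∈ G.edgeSet) ∧ ∃ φ : Fin m ↪ V, ∀ p, e p = Sym2.map φ (F p)}

noncomputable def InjCount {l m : ℕ} (F : Fin l → Sym2 (Fin m)) {V : Type*}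
    (G : SimpleGraph V) : ℕ :=
  Nat.card {φ : Fin m ↪ V // ∀ p, Sym2.map φ (F p) ∈ G.edgeSet}

noncomputable def autMG {l m : ℕ} (F : Fin l → Sym2 (Fin m)) : ℕ :=
  Nat.card {σ : Equiv.Perm (Fin m) // ∀ p, Sym2.map σ (F p) = F p}

lemma autMG_pos {l m : ℕ} (F : Fin l → Sym2 (Fin m)) : 0 < autMG F := by
  have : Nonempty {σ : Equiv.Perm (Fin m) // ∀ p, Sym2.map σ (F p) = F p} :=
    ⟨⟨Equiv.refl _, fun p => by simp⟩⟩
  exact Nat.card_pos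

def ΦMap {l m : ℕ} (F : Fin l → Sym2 (Fin m)) {V : Type*} (G : SimpleGraph V)
    (φ : {φ : Fin m ↪ V // ∀ p, Sym2.map φ (F p) ∈ G.edgeSet}) :
    {e : Fin l → Sym2 V //
      (∀ p, e p ∈ G.edgeSet) ∧ ∃ ψ : Fin m ↪ V, ∀ p, e p = Sym2.map ψ (F p)} :=
  ⟨fun p => Sym2.map φ.1 (F p), fun p => φ.2 p, ⟨φ.1, fun p => rfl⟩⟩

lemma injCount_eq_aut_mul {l m : ℕ} (F : Fin l → Sym2 (Fin m)) {V : Type*} [Fintype V]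
    (G : SimpleGraph V) (hcov : ∀ v : Fin m, ∃ p, v ∈ F p) :
    InjCount F G = autMG F * iCount F G := by
  classical
  set iT := {e : Fin l → Sym2 V //
    (∀ p, e p ∈ G.edgeSet) ∧ ∃ φ : Fin m ↪ V, ∀ p, e p = Sym2.map φ (F p)}
  set jT := {φ : Fin m ↪ V // ∀ p, Sym2.map φ (F p) ∈ G.edgeSet}
  set Φ : jT → iT := ΦMap F G with hΦdef
  -- each fiber has cardinality autMG F
  have hfib : ∀ e : iT, Nat.card {φ : jT // Φ φ = e} = autMG F := by
    intro e
    obtain ⟨φ₀, hφ₀⟩ := e.2.2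
    have he := e.2.1
    symm
    apply Nat.card_eq_of_bijective
      (f := fun σ : {σ : Equiv.Perm (Fin m) // ∀ p, Sym2.map σ (F p) = F p} =>
        (⟨⟨σ.1.toEmbedding.trans φ₀, by
          intro p
          show Sym2.map (φ₀ ∘ σ.1) (F p) ∈ G.edgeSet
          rw [← Sym2.map_map, σ.2 p, ← hφ₀ p]
          exact he p⟩, by
          apply Subtype.ext
          funext p
          show Sym2.map (φ₀ ∘ σ.1) (F p) = e.1 p
          rw [← Sym2.map_map, σ.2 p, hφ₀ p]⟩ : {φ : jT // Φ φ = e}))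
    constructor
    · intro σ τ h
      apply Subtype.ext; apply Equiv.ext; intro v
      have := congrArg (fun x => (x.1.1 : Fin m → V) v) h
      simpa using φ₀.injective this
    · rintro ⟨⟨φ, hφ⟩, hΦ⟩
      have hΦ' : ∀ p, Sym2.map φ (F p) = e.1 p := by
        intro p
        exact congrFun (congrArg Subtype.val hΦ) p
      have hrange : ∀ v : Fin m, ∃ w, φ₀ w = φ v := by
        intro v
        obtain ⟨p, hp⟩ := hcov v
        have : φ v ∈ Sym2.map φ₀ (F p) := by
          rw [← hφ₀ p, ← hΦ' p]
          exact Sym2.mem_map.2 ⟨v, hp, rfl⟩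
        obtain ⟨a, _, ha⟩ := Sym2.mem_map.1 this
        exact ⟨a, ha⟩
      choose ψ hψ using hrange
      have hψinj : Function.Injective ψ := by
        intro a b hab
        apply φ.injective
        rw [← hψ a, ← hψ b, hab]
      obtain ⟨σ, hσ⟩ : ∃ σ : Equiv.Perm (Fin m), (σ : Fin m → Fin m) = ψ :=
        ⟨Equiv.ofBijective ψ (Finite.injective_iff_bijective.1 hψinj), rfl⟩
      refine ⟨⟨σ, ?_⟩, ?_⟩
      · intro p
        apply Sym2.map.injective φ₀.injective
        rw [Sym2.map_map]
        have : (φ₀ ∘ σ : Fin m → V) = φ := by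
          funext v; simp [hσ, hψ]
        rw [this, hΦ' p, hφ₀ p]
      · apply Subtype.ext; apply Subtype.ext
        apply DFunLike.ext
        intro v
        show φ₀ (σ v) = φ v
        rw [hσ]; exact hψ v
  -- sum over fibers
  haveI : Fintype iT := Fintype.ofFinite _
  haveI : Fintype jT := Fintype.ofFinite _
  have := Nat.card_congr (Equiv.sigmaFiberEquiv Φ).symm
  rw [InjCount]
  rw [this]
  rw [Nat.card_eq_fintype_card, Fintype.card_sigma]
  have : ∀ e : iT, Fintype.card {φ : jT // Φ φ = e} = autMG F := by
    intro e; rw [← Nat.card_eq_fintype_card]; exact hfib e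
  simp only [this, Finset.sum_const, Finset.card_univ, smul_eq_mul]
  rw [iCount, Nat.card_eq_fintype_card, mul_comm]

def pbGraph {V : Type*} (G : SimpleGraph V) {m : ℕ} (φ : Fin m ↪ V) :
    SimpleGraph (Fin m) where
  Adj u v := G.Adj (φ u) (φ v)
  symm := ⟨fun u v (h : G.Adj (φ u) (φ v)) => h.symm⟩
  loopless := ⟨fun u (h : G.Adj (φ u) (φ u)) => G.irrefl h⟩

open scoped Classical in
lemma injCount_eq_sum {l m : ℕ} (F : Fin l → Sym2 (Fin m)) {V : Type*} [Fintype V]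
    (G : SimpleGraph V) (hdiag : ∀ p, ¬ (F p).IsDiag) :
    InjCount F G = ∑ H : SimpleGraph (Fin m),
      if SimpleGraph.fromEdgeSet (Set.range F) ≤ H then indCount H G else 0 := by
  classical
  set F' := SimpleGraph.fromEdgeSet (Set.range F) with hF'
  set jT := {φ : Fin m ↪ V // ∀ p, Sym2.map φ (F p) ∈ G.edgeSet}
  set Ψ : jT → SimpleGraph (Fin m) := fun φ => pbGraph G φ.1 with hΨdef
  have hle : ∀ φ : jT, F' ≤ Ψ φ := by
    intro φ u v h
    rw [hF', SimpleGraph.fromEdgeSet_adj] at h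
    obtain ⟨⟨p, hp⟩, hne⟩ := h
    have h2 : Sym2.map φ.1 (F p) ∈ G.edgeSet := φ.2 p
    rw [hp] at h2
    show G.Adj (φ.1 u) (φ.1 v)
    simpa [Sym2.map_pair_eq, SimpleGraph.mem_edgeSet] using h2
  have hfib : ∀ H : SimpleGraph (Fin m),
      Nat.card {φ : jT // Ψ φ = H} = if F' ≤ H then indCount H G else 0 := by
    intro H
    by_cases hH : F' ≤ H
    · rw [if_pos hH]
      symm
      apply Nat.card_eq_of_bijective (f := fun f : H ↪g G =>
        (⟨⟨f.toEmbedding, by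
          intro p
          have hne := hdiag p
          have hmem : F p ∈ Set.range F := ⟨p, rfl⟩
          revert hne hmem
          induction (F p) using Sym2.ind with
          | _ a b =>
            intro hne hmem
            rw [Sym2.mk_isDiag_iff] at hne
            have hadj : H.Adj a b :=
              hH ((SimpleGraph.fromEdgeSet_adj _).2 ⟨hmem, hne⟩)
            have : G.Adj (f a) (f b) := f.map_rel_iff.2 hadj
            simpa [Sym2.map_pair_eq, SimpleGraph.mem_edgeSet] using this⟩, by
          apply SimpleGraph.ext
          ext u v
          exact f.map_rel_iff⟩ : {φ : jT // Ψ φ = H}))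
      constructor
      · intro f g h
        apply RelEmbedding.ext
        intro v
        exact congrArg (fun x => (x.1.1 : Fin m → V) v) h
      · rintro ⟨⟨φ, hφ⟩, hfib⟩
        refine ⟨⟨φ, ?_⟩, ?_⟩
        · intro u v
          show G.Adj (φ u) (φ v) ↔ H.Adj u v
          rw [← hfib]
          exact Iff.rfl
        · apply Subtype.ext; apply Subtype.ext; rfl
    · rw [if_neg hH]
      have : IsEmpty {φ : jT // Ψ φ = H} := by
        constructor
        rintro ⟨φ, hφ⟩
        exact hH (hφ ▸ hle φ)
      exact Nat.card_of_isEmpty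
  haveI : Fintype jT := Fintype.ofFinite _
  have := Nat.card_congr (Equiv.sigmaFiberEquiv Ψ).symm
  rw [InjCount, this, Nat.card_eq_fintype_card, Fintype.card_sigma]
  congr 1
  funext H
  rw [← Nat.card_eq_fintype_card]
  exact hfib H

lemma indCount_one {F : SimpleGraph (Fin 1)} {V : Type*} [Fintype V] (G : SimpleGraph V) :
    indCount F G = Fintype.card V := by
  rw [indCount, ← Nat.card_eq_fintype_card]
  apply Nat.card_congr
  refine ⟨fun f => f 0, fun v => ⟨⟨fun _ => v, fun a b _ => Subsingleton.elim a b⟩, ?_⟩, ?_, ?_⟩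
  · intro a b
    constructor
    · intro h; exact absurd h G.irrefl
    · intro h; rw [Subsingleton.elim a b] at h; exact absurd h F.irrefl
  · intro f; apply RelEmbedding.ext; intro v
    show f 0 = f v
    exact congrArg f (Subsingleton.elim 0 v)
  · intro v; rfl

lemma exists_adj_of_connected {m : ℕ} (hm : 2 ≤ m) {F : SimpleGraph (Fin m)}
    (hF : F.Connected) : ∀ v : Fin m, ∃ w, F.Adj v w := by
  intro v
  have : 1 < Fintype.card (Fin m) := by simp only [Fintype.card_fin]; omega
  obtain ⟨u, hu⟩ := Fintype.exists_ne_of_one_lt_card this v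
  obtain ⟨p⟩ := hF.preconnected v u
  cases p with
  | nil => exact absurd rfl hu.symm
  | cons h _ => exact ⟨_, h⟩

lemma exists_labeling {m : ℕ} (hm : 2 ≤ m) (F : SimpleGraph (Fin m)) (hF : F.Connected) :
    ∃ (l : ℕ) (Fl : Fin l → Sym2 (Fin m)), 0 < l ∧ Set.range Fl = F.edgeSet ∧
      SimpleGraph.fromEdgeSet (Set.range Fl) = F ∧
      (∀ v : Fin m, ∃ p, v ∈ Fl p) ∧ (∀ p, ¬ (Fl p).IsDiag) := by
  classical
  have h1 : (Set.range fun p => (F.edgeFinset.equivFin.symm p : Sym2 (Fin m)))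
      = F.edgeSet := by
    rw [show (fun p => (F.edgeFinset.equivFin.symm p : Sym2 (Fin m)))
        = Subtype.val ∘ F.edgeFinset.equivFin.symm from rfl,
      Set.range_comp, Equiv.range_eq_univ, Set.image_univ, Subtype.range_coe]
    exact F.coe_edgeFinset
  refine ⟨F.edgeFinset.card, fun p => (F.edgeFinset.equivFin.symm p : Sym2 (Fin m)),
    ?_, h1, ?_, ?_, ?_⟩
  · obtain ⟨w, hw⟩ := exists_adj_of_connected hm hF ⟨0, by omega⟩
    rw [Finset.card_pos]
    exact ⟨s(⟨0, by omega⟩, w), SimpleGraph.mem_edgeFinset.2 hw⟩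
  · rw [h1, SimpleGraph.fromEdgeSet_edgeSet]
  · intro v
    obtain ⟨w, hw⟩ := exists_adj_of_connected hm hF v
    have hmem : s(v, w) ∈ F.edgeFinset := SimpleGraph.mem_edgeFinset.2 hw
    refine ⟨F.edgeFinset.equivFin ⟨s(v, w), hmem⟩, ?_⟩
    simp [Sym2.mem_iff]
  · intro p
    exact F.not_isDiag_of_mem_edgeSet (SimpleGraph.mem_edgeFinset.1
      (F.edgeFinset.equivFin.symm p).2)

/-- a sequence of graphs of maximum degree at most `D` with `v(G n) → ∞`
is left convergent iff for every `l > 0` and every connected edge-labeled multigraph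
`F` with `l` edges and no isolated vertices (i.e. `F ∈ 𝓕_l`), the limit
`lim_n i(F, G n)/v(G n)` exists. -/
theorem left_convergent_iff_iCount_converges
    (D : ℕ) (hD : 0 < D) (N : ℕ → ℕ) (G : ∀ n, SimpleGraph (Fin (N n)))
    (hdeg : ∀ n, DegLE (G n) D) (hV : Tendsto N atTop atTop) :
    LeftConvergent N G ↔
      ∀ (l : ℕ), 0 < l → ∀ (m : ℕ) (F : Fin l → Sym2 (Fin m)), GoodMG F →
        ∃ L : ℝ, Tendsto (fun n => (iCount F (G n) : ℝ) / (N n : ℝ)) atTop (nhds L) := by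
  classical
  constructor
  · intro hLC l hl m F hF
    obtain ⟨hcov, hdiag, hconn⟩ := hF
    set F' := SimpleGraph.fromEdgeSet (Set.range F) with hF'
    have hLH : ∀ H : SimpleGraph (Fin m), ∃ LH : ℝ, F' ≤ H →
        Tendsto (fun n => (indCount H (G n) : ℝ) / (N n : ℝ)) atTop (nhds LH) := by
      intro H
      by_cases h : F' ≤ H
      · obtain ⟨L, hL⟩ := hLC m H (SimpleGraph.Connected.mono h hconn)
        exact ⟨L, fun _ => hL⟩
      · exact ⟨0, fun h' => absurd h' h⟩
    choose LH hLHt using hLH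
    refine ⟨(∑ H : SimpleGraph (Fin m), if F' ≤ H then LH H else 0) / (autMG F : ℝ), ?_⟩
    have hsum : Tendsto (fun n => (∑ H : SimpleGraph (Fin m),
        if F' ≤ H then (indCount H (G n) : ℝ) else 0) / (N n : ℝ)) atTop
        (nhds (∑ H : SimpleGraph (Fin m), if F' ≤ H then LH H else 0)) := by
      simp_rw [Finset.sum_div]
      apply tendsto_finset_sum
      intro H _
      by_cases h : F' ≤ H
      · simp only [if_pos h]
        exact hLHt H h
      · simp only [if_neg h, zero_div]
        exact tendsto_const_nhds
    have ha : (autMG F : ℝ) ≠ 0 := by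
      exact_mod_cast (autMG_pos F).ne'
    have key : ∀ n, (iCount F (G n) : ℝ) / (N n : ℝ) =
        ((∑ H : SimpleGraph (Fin m), if F' ≤ H then (indCount H (G n) : ℝ) else 0)
          / (N n : ℝ)) / (autMG F : ℝ) := by
      intro n
      have h1 : (autMG F : ℝ) * (iCount F (G n) : ℝ) =
          ∑ H : SimpleGraph (Fin m), if F' ≤ H then (indCount H (G n) : ℝ) else 0 := by
        have h2 := injCount_eq_sum F (G n) hdiag
        rw [injCount_eq_aut_mul F (G n) hcov] at h2
        calc (autMG F : ℝ) * (iCount F (G n) : ℝ)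
            = ((autMG F * iCount F (G n) : ℕ) : ℝ) := by push_cast; ring
          _ = _ := by
              rw [h2]
              push_cast [apply_ite (Nat.cast : ℕ → ℝ)]
              rfl
      rw [div_right_comm, ← h1, mul_comm (autMG F : ℝ), mul_div_assoc, div_self ha,
        mul_one]
    exact Tendsto.congr (fun n => (key n).symm) (hsum.div_const _)
  · intro hIC m F hFconn
    have main : ∀ k, ∀ F : SimpleGraph (Fin m), F.Connected →
        (Finset.univ.filter fun H => F < H).card ≤ k →
        ∃ L : ℝ, Tendsto (fun n => (indCount F (G n) : ℝ) / (N n : ℝ)) atTop (nhds L) := by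
      intro k
      induction k using Nat.strong_induction_on with
      | _ k ih =>
        intro F hFc hcard
        rcases Nat.lt_or_ge m 2 with hm | hm
        · have hm1 : m = 1 := by
            have : m ≠ 0 := by
              rintro rfl
              exact Fin.elim0 hFc.nonempty.some
            omega
          subst hm1
          refine ⟨1, ?_⟩
          have hev : ∀ᶠ n in atTop, (indCount F (G n) : ℝ) / (N n : ℝ) = 1 := by
            filter_upwards [hV.eventually_ge_atTop 1] with n hn
            rw [indCount_one, Fintype.card_fin]
            have : (0 : ℝ) < (N n : ℝ) := by exact_mod_cast hn
            field_simp
          exact Tendsto.congr' (EventuallyEq.symm hev) tendsto_const_nhds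
        · obtain ⟨l, Fl, hl, hrange, hfrom, hcov, hdiag⟩ := exists_labeling hm F hFc
          obtain ⟨L, hL⟩ := hIC l hl m Fl ⟨hcov, hdiag, by rw [hfrom]; exact hFc⟩
          have hLH : ∀ H : SimpleGraph (Fin m), ∃ LH : ℝ, F < H →
              Tendsto (fun n => (indCount H (G n) : ℝ) / (N n : ℝ)) atTop (nhds LH) := by
            intro H
            by_cases h : F < H
            · have hsub : (Finset.univ.filter fun H' => H < H').card <
                  (Finset.univ.filter fun H' => F < H').card := by
                apply Finset.card_lt_card
                constructor
                · intro H' hH'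
                  simp only [Finset.mem_filter, Finset.mem_univ, true_and] at hH' ⊢
                  exact h.trans hH'
                · intro hsub'
                  have hmem : H ∈ Finset.univ.filter fun H' => F < H' := by
                    simp only [Finset.mem_filter, Finset.mem_univ, true_and]
                    exact h
                  have h2 := hsub' hmem
                  simp only [Finset.mem_filter, Finset.mem_univ, true_and] at h2
                  exact lt_irrefl H h2
              obtain ⟨LH, hLHt⟩ := ih _ (lt_of_lt_of_le hsub hcard) H
                (SimpleGraph.Connected.mono h.le hFc) le_rfl
              exact ⟨LH, fun _ => hLHt⟩
            · exact ⟨0, fun h' => absurd h' h⟩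
          choose LH hLHt using hLH
          refine ⟨(autMG Fl : ℝ) * L - ∑ H : SimpleGraph (Fin m),
            if F < H then LH H else 0, ?_⟩
          have hInj : Tendsto (fun n => (InjCount Fl (G n) : ℝ) / (N n : ℝ)) atTop
              (nhds ((autMG Fl : ℝ) * L)) := by
            have heq : ∀ n, (InjCount Fl (G n) : ℝ) / (N n : ℝ) =
                (autMG Fl : ℝ) * ((iCount Fl (G n) : ℝ) / (N n : ℝ)) := by
              intro n
              rw [injCount_eq_aut_mul Fl (G n) hcov]
              push_cast
              ring
            exact Tendsto.congr (fun n => (heq n).symm) (hL.const_mul _)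
          have hsum : Tendsto (fun n => (∑ H : SimpleGraph (Fin m),
              if F < H then (indCount H (G n) : ℝ) else 0) / (N n : ℝ)) atTop
              (nhds (∑ H : SimpleGraph (Fin m), if F < H then LH H else 0)) := by
            simp_rw [Finset.sum_div]
            apply tendsto_finset_sum
            intro H _
            by_cases h : F < H
            · simp only [if_pos h]
              exact hLHt H h
            · simp only [if_neg h, zero_div]
              exact tendsto_const_nhds
          have hfin := hInj.sub hsum
          apply Tendsto.congr ?_ hfin
          intro n
          have hR : (InjCount Fl (G n) : ℝ) = (indCount F (G n) : ℝ) +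
              ∑ H : SimpleGraph (Fin m), if F < H then (indCount H (G n) : ℝ) else 0 := by
            have h2 := injCount_eq_sum Fl (G n) hdiag
            have h3 : (InjCount Fl (G n) : ℝ) = ∑ H : SimpleGraph (Fin m),
                if F ≤ H then (indCount H (G n) : ℝ) else 0 := by
              rw [h2]
              push_cast [apply_ite (Nat.cast : ℕ → ℝ)]
              simp only [hfrom]
            rw [h3]
            have hsplit : (Finset.univ : Finset (SimpleGraph (Fin m))).filter
                (fun H => F ≤ H) = insert F (Finset.univ.filter fun H => F < H) := by
              ext H
              simp only [Finset.mem_insert, Finset.mem_filter, Finset.mem_univ, true_and]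
              constructor
              · intro h
                rcases h.lt_or_eq with h' | h'
                · exact Or.inr h'
                · exact Or.inl h'.symm
              · rintro (rfl | h)
                · exact le_rfl
                · exact h.le
            rw [← Finset.sum_filter, hsplit, Finset.sum_insert (by simp), Finset.sum_filter]
          show _ = _
          rw [hR]
          ring
    exact main ((Finset.univ.filter fun H => F < H).card) F hFconn le_rfl
end

section
/- Let G be a finite graph, let k and l be positive integers, and let (i_1,j_1), …, (i_l,j_l) ∈ [k]² be pairs of colors forming the edge-labeled multigraph J on [k]. Then κ(v(G)·X_{i_1,j_1}, …, v(G)·X_{i_l,j_l}) = Σ_{F ∈ 𝓕_l} i(F,G) · κ(F,J), where for F ∈ 𝓕_l one sets κ(F,J) = Σ_π (|π|-1)! · (-1)^{|π|-1} · x(F_π, J), the sum over set partitions π of [l]; here F_π is the disjoint union over blocks B ∈ π of the subgraphs of F induced by the edges with labels in B (edges keeping their labels), and x(E,J) = E[∏_{p=1}^l Y_{i_p,j_p,f_p}] where f_1,…,f_l are the labeled edges of E and Y_{i,j,e} is the indicator that, in a uniformly random coloring of V(E) by [k], the two endpoints of e receive colors i and j. -/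
/-- For a coloring `C` of the vertices by `Fin k`, the number of edges of `G` between
color class `i` and color class `j`; this is `v(G) * X i j`. -/
noncomputable def eCount {V : Type*} [Fintype V] (G : SimpleGraph V) {k : ℕ}
    (C : V → Fin k) (i j : Fin k) : ℕ :=
  letI := Classical.decEq V
  letI := Classical.decRel G.Adj
  (G.edgeFinset.filter (fun e => Sym2.map C e = s(i, j))).card

/-- `P` is a set partition of `Fin l`. -/
def IsSetPartition {l : ℕ} (P : Finset (Finset (Fin l))) : Prop :=
  ∅ ∉ P ∧ ∀ i : Fin l, ∃ B ∈ P, i ∈ B ∧ ∀ B' ∈ P, i ∈ B' → B' = B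

/-- Expectation of `Z` over a uniformly random coloring of `V` with `k` colors. -/
noncomputable def colorExp {V : Type*} [Fintype V] (k : ℕ) (Z : (V → Fin k) → ℝ) : ℝ :=
  letI := Classical.decEq V
  (∑ C : V → Fin k, Z C) / (k : ℝ) ^ (Fintype.card V)

open Classical in
/-- The joint cumulant of the random variables `Z 1, …, Z l` defined on the space of
uniformly random colorings of `V` with `k` colors:
`κ(Z 1, …, Z l) = Σ_π (|π|-1)! (-1)^(|π|-1) Π_{B ∈ π} 𝔼[Π_{p ∈ B} Z p]`. -/
noncomputable def jointCumulantColor {V : Type*} [Fintype V] (k : ℕ) {l : ℕ}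
    (Z : Fin l → (V → Fin k) → ℝ) : ℝ :=
  ∑ P ∈ Finset.univ.filter (fun P : Finset (Finset (Fin l)) => IsSetPartition P),
    (-1 : ℝ) ^ (P.card - 1) * (Nat.factorial (P.card - 1) : ℝ) *
      ∏ B ∈ P, colorExp k (fun C => ∏ p ∈ B, Z p C)

/-- `x`-value of a block: for an edge-labeled multigraph `F` on `W`, a set `S` of edge
labels and target color pairs `ij`, this is the probability that a uniformly random
coloring `c : W → Fin k` colors the endpoints of the edge `F p` by the pair `ij p` for
every `p ∈ S`.  Taking `S` the label set of a component of a disjoint union, this is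
exactly the factor `x(component, J)`; taking `S = univ` it is `x(F, J)`. -/
noncomputable def xVal {W : Type*} [Fintype W] {l k : ℕ} (F : Fin l → Sym2 W)
    (S : Finset (Fin l)) (ij : Fin l → Sym2 (Fin k)) : ℝ :=
  (Nat.card {c : W → Fin k // ∀ p ∈ S, Sym2.map c (F p) = ij p} : ℝ) /
    (k : ℝ) ^ (Fintype.card W)

open Classical in
/-- `κ(F, J) = Σ_π (|π|-1)! (-1)^(|π|-1) x(F_π, J)` where
`x(F_π, J) = Π_{B ∈ π} x(F|_B, J)` is the `x`-value of the disjoint union `F_π` of the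
subgraphs of `F` spanned by the edges with labels in the blocks of `π`. -/
noncomputable def kappaFJ {l m k : ℕ} (F : Fin l → Sym2 (Fin m))
    (ij : Fin l → Sym2 (Fin k)) : ℝ :=
  ∑ P ∈ Finset.univ.filter (fun P : Finset (Finset (Fin l)) => IsSetPartition P),
    (-1 : ℝ) ^ (P.card - 1) * (Nat.factorial (P.card - 1) : ℝ) * ∏ B ∈ P, xVal F B ij

/-- Isomorphism of edge-labeled multigraphs: a bijection of the vertex sets carrying
edge `p` of `F₁` to edge `p` of `F₂`. -/
def MGIso {l m₁ m₂ : ℕ} (F₁ : Fin l → Sym2 (Fin m₁)) (F₂ : Fin l → Sym2 (Fin m₂)) : Prop :=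
  ∃ φ : Fin m₁ ≃ Fin m₂, ∀ p, Sym2.map φ (F₁ p) = F₂ p


set_option linter.unusedSectionVars false

open Finset

section PartA
variable {ι : Type*} [Fintype ι] [DecidableEq ι]

/-- `P` is a set partition of the finset `S`. -/
def IsPartOf (S : Finset ι) (P : Finset (Finset ι)) : Prop :=
  (∀ B ∈ P, B ⊆ S) ∧ ∅ ∉ P ∧ ∀ i ∈ S, ∃ B ∈ P, i ∈ B ∧ ∀ B' ∈ P, i ∈ B' → B' = B

open Classical in
noncomputable def partsOf (S : Finset ι) : Finset (Finset (Finset ι)) :=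
  Finset.univ.filter (fun P => IsPartOf S P)

@[simp] lemma mem_partsOf {S : Finset ι} {P : Finset (Finset ι)} :
    P ∈ partsOf S ↔ IsPartOf S P := by
  classical
  simp [partsOf, Finset.filter_congr_decidable]

noncomputable def wP (x : Finset ι → ℝ) (P : Finset (Finset ι)) : ℝ :=
  (-1 : ℝ) ^ (P.card - 1) * (Nat.factorial (P.card - 1) : ℝ) * ∏ B ∈ P, x B

noncomputable def cumS (x : Finset ι → ℝ) (S : Finset ι) : ℝ :=
  ∑ P ∈ partsOf S, wP x P

lemma IsPartOf.unique {S : Finset ι} {P : Finset (Finset ι)} (h : IsPartOf S P)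
    {B C : Finset ι} {i : ι} (hB : B ∈ P) (hC : C ∈ P) (hiB : i ∈ B) (hiC : i ∈ C) :
    B = C := by
  have hiS : i ∈ S := h.1 B hB hiB
  obtain ⟨B0, hB0, hi0, huniq⟩ := h.2.2 i hiS
  rw [huniq B hB hiB, huniq C hC hiC]

lemma isPartOf_insert {S B : Finset ι} {P : Finset (Finset ι)} (hP : IsPartOf B P)
    (hBS : B ⊆ S) (hne : B ≠ S) : IsPartOf S (insert (S \ B) P) := by
  obtain ⟨hsub, hnem, hcov⟩ := hP
  have hSBne : S \ B ≠ ∅ := by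
    intro h
    exact hne (subset_antisymm hBS (by
      intro a ha
      by_contra hab
      have : a ∈ S \ B := mem_sdiff.2 ⟨ha, hab⟩
      simp [h] at this))
  refine ⟨?_, ?_, ?_⟩
  · intro C hC
    rcases mem_insert.1 hC with rfl | hC
    · exact sdiff_subset
    · exact (hsub C hC).trans hBS
  · intro h
    rcases mem_insert.1 h with h | h
    · exact hSBne h.symm
    · exact hnem h
  · intro i hiS
    by_cases hiB : i ∈ B
    · obtain ⟨C, hC, hiC, huniq⟩ := hcov i hiB
      refine ⟨C, mem_insert_of_mem hC, hiC, ?_⟩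
      intro B' hB' hiB'
      rcases mem_insert.1 hB' with rfl | hB'
      · exact absurd ((mem_sdiff.1 hiB').2 hiB) (by simp [hiB])
      · exact huniq B' hB' hiB'
    · refine ⟨S \ B, mem_insert_self _ _, mem_sdiff.2 ⟨hiS, hiB⟩, ?_⟩
      intro B' hB' hiB'
      rcases mem_insert.1 hB' with rfl | hB'
      · rfl
      · exact absurd (hsub B' hB' hiB') hiB

lemma isPartOf_erase {S D : Finset ι} {Q : Finset (Finset ι)} (hQ : IsPartOf S Q)
    (hD : D ∈ Q) : IsPartOf (S \ D) (Q.erase D) := by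
  obtain ⟨hsub, hnem, hcov⟩ := hQ
  refine ⟨?_, ?_, ?_⟩
  · intro C hC
    have hCQ := mem_of_mem_erase hC
    have hCD := ne_of_mem_erase hC
    intro a haC
    refine mem_sdiff.2 ⟨hsub C hCQ haC, fun haD => ?_⟩
    exact hCD (IsPartOf.unique ⟨hsub, hnem, hcov⟩ hCQ hD haC haD)
  · intro h; exact hnem (mem_of_mem_erase h)
  · intro i hi
    obtain ⟨hiS, hiD⟩ := mem_sdiff.1 hi
    obtain ⟨C, hC, hiC, huniq⟩ := hcov i hiS
    have hCD : C ≠ D := fun h => hiD (h ▸ hiC)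
    exact ⟨C, mem_erase.2 ⟨hCD, hC⟩, hiC, fun B' hB' hiB' =>
      huniq B' (mem_of_mem_erase hB') hiB'⟩

lemma sdiff_not_mem {S B : Finset ι} {P : Finset (Finset ι)} (hP : IsPartOf B P)
    (hBS : B ⊆ S) (hne : B ≠ S) : S \ B ∉ P := by
  intro h
  have hsub := hP.1 _ h
  have : (S \ B).Nonempty := by
    rw [Finset.sdiff_nonempty]
    intro hSB
    exact hne (subset_antisymm hBS hSB)
  obtain ⟨a, ha⟩ := this
  exact (mem_sdiff.1 ha).2 (hsub ha)

lemma partsOf_card_one {S : Finset ι} {Q : Finset (Finset ι)} (hQ : IsPartOf S Q)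
    (h1 : Q.card = 1) : Q = {S} := by
  obtain ⟨C, rfl⟩ := Finset.card_eq_one.1 h1
  have hCS : C ⊆ S := hQ.1 C (mem_singleton_self C)
  have hSC : S ⊆ C := by
    intro i hi
    obtain ⟨B, hB, hiB, _⟩ := hQ.2.2 i hi
    rwa [mem_singleton.1 hB] at hiB
  rw [subset_antisymm hCS hSC]

lemma singleton_isPartOf {S : Finset ι} (hS : S.Nonempty) : IsPartOf S ({S} : Finset (Finset ι)) := by
  refine ⟨fun B hB => by simp [mem_singleton.1 hB], ?_, ?_⟩
  · simp only [mem_singleton]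
    exact fun h => (Finset.nonempty_iff_ne_empty.1 hS) h.symm
  · intro i hi
    exact ⟨S, mem_singleton_self S, hi, fun B' hB' _ => mem_singleton.1 hB'⟩

lemma filter_not_mem_eq_erase {S : Finset ι} {Q : Finset (Finset ι)} (hQ : IsPartOf S Q)
    {s0 : ι} (hs0 : s0 ∈ S) :
    ∃ B0 ∈ Q, s0 ∈ B0 ∧ Q.filter (fun D => s0 ∉ D) = Q.erase B0 := by
  obtain ⟨B0, hB0, hs0B0, huniq⟩ := hQ.2.2 s0 hs0
  refine ⟨B0, hB0, hs0B0, ?_⟩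
  ext C
  simp only [mem_filter, mem_erase]
  constructor
  · rintro ⟨hC, hnC⟩
    exact ⟨fun h => hnC (h ▸ hs0B0), hC⟩
  · rintro ⟨hne, hC⟩
    exact ⟨hC, fun hs0C => hne (huniq C hC hs0C)⟩

lemma fact_arith (q : ℕ) (hq : 2 ≤ q) :
    (-1 : ℝ) ^ (q - 1) * (Nat.factorial (q - 1) : ℝ) +
      ((q : ℝ) - 1) * ((-1 : ℝ) ^ (q - 2) * (Nat.factorial (q - 2) : ℝ)) = 0 := by
  obtain ⟨r, rfl⟩ : ∃ r, q = r + 2 := ⟨q - 2, by omega⟩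
  have h1 : r + 2 - 1 = r + 1 := by omega
  have h2 : r + 2 - 2 = r := by omega
  rw [h1, h2, Nat.factorial_succ, pow_succ]
  push_cast
  ring

/-- The per-Q sum in the recursion. -/
lemma perQ_sum (x : Finset ι → ℝ) {S : Finset ι} {s0 : ι} (hs0 : s0 ∈ S)
    {Q : Finset (Finset ι)} (hQ : IsPartOf S Q) :
    (wP x Q + ∑ D ∈ Q.filter (fun D => s0 ∉ D), wP x (Q.erase D) * x D)
      = if Q = {S} then x S else 0 := by
  obtain ⟨B0, hB0, hs0B0, hfe⟩ := filter_not_mem_eq_erase hQ hs0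
  have hQne : Q.Nonempty := ⟨B0, hB0⟩
  have hterm : ∀ D ∈ Q.erase B0, wP x (Q.erase D) * x D =
      (-1 : ℝ) ^ (Q.card - 2) * (Nat.factorial (Q.card - 2) : ℝ) * ∏ B ∈ Q, x B := by
    intro D hD
    have hDQ : D ∈ Q := mem_of_mem_erase hD
    have hcard : (Q.erase D).card = Q.card - 1 := card_erase_of_mem hDQ
    rw [wP, hcard]
    have h21 : Q.card - 1 - 1 = Q.card - 2 := by omega
    rw [h21, mul_assoc ((-1:ℝ)^(Q.card-2) * (Nat.factorial (Q.card-2) : ℝ)),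
      Finset.prod_erase_mul _ _ hDQ]
  rw [hfe, Finset.sum_congr rfl hterm, Finset.sum_const, card_erase_of_mem hB0]
  rcases Nat.lt_or_ge Q.card 2 with hq | hq
  · have h1 : Q.card = 1 := by
      have := Finset.card_pos.2 hQne; omega
    have hQS : Q = {S} := partsOf_card_one hQ h1
    subst hQS
    rw [if_pos rfl]
    simp [wP]
  · have hQS : Q ≠ {S} := by
      intro h; rw [h] at hq; simp at hq
    rw [if_neg hQS, wP]
    have := fact_arith Q.card hq
    have hcast : ((Q.card - 1 : ℕ) : ℝ) = (Q.card : ℝ) - 1 := by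
      have : 1 ≤ Q.card := by omega
      push_cast [this]; ring
    rw [nsmul_eq_mul, hcast]
    linear_combination (∏ B ∈ Q, x B) * this

/-- The cumulant recursion. -/
lemma cum_recursion (x : Finset ι → ℝ) (hx0 : x ∅ = 1) {S : Finset ι} {s0 : ι}
    (hs0 : s0 ∈ S) :
    ∑ B ∈ S.powerset.filter (fun B => s0 ∈ B), cumS x B * x (S \ B) = x S := by
  classical
  have hLHS : ∑ B ∈ S.powerset.filter (fun B => s0 ∈ B), cumS x B * x (S \ B)
      = ∑ q ∈ (S.powerset.filter (fun B => s0 ∈ B)).sigma (fun B => partsOf B),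
          wP x q.2 * x (S \ q.1) := by
    rw [Finset.sum_sigma]
    exact Finset.sum_congr rfl (fun B _ => by rw [cumS, Finset.sum_mul])
  rw [hLHS]
  have hmid : ∑ q ∈ (S.powerset.filter (fun B => s0 ∈ B)).sigma (fun B => partsOf B),
      wP x q.2 * x (S \ q.1)
      = ∑ q ∈ (partsOf S).sigma
          (fun Q => insert none ((Q.filter (fun D => s0 ∉ D)).image some)),
          Option.elim q.2 (wP x q.1) (fun D => wP x (q.1.erase D) * x D) := by
    refine Finset.sum_nbij'
      (fun q => if h : q.1 = S then ⟨q.2, none⟩ else ⟨insert (S \ q.1) q.2, some (S \ q.1)⟩)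
      (fun q => Option.elim q.2 ⟨S, q.1⟩ (fun D => ⟨S \ D, q.1.erase D⟩)) ?_ ?_ ?_ ?_ ?_
    · rintro ⟨B, P⟩ hq
      simp only [Finset.mem_sigma, mem_filter, mem_powerset, mem_partsOf] at hq
      obtain ⟨⟨hBS, hs0B⟩, hP⟩ := hq
      by_cases h : B = S
      · subst h
        simp only [dif_pos rfl, Finset.mem_sigma, mem_partsOf]
        exact ⟨hP, mem_insert_self _ _⟩
      · simp only [dif_neg h, Finset.mem_sigma, mem_partsOf]
        refine ⟨isPartOf_insert hP hBS h, ?_⟩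
        refine mem_insert_of_mem (Finset.mem_image.2 ⟨S \ B, ?_, rfl⟩)
        refine mem_filter.2 ⟨mem_insert_self _ _, ?_⟩
        simp only [mem_sdiff]
        exact fun h' => h'.2 hs0B
    · rintro ⟨Q, o⟩ hq
      simp only [Finset.mem_sigma, mem_partsOf] at hq
      obtain ⟨hQ, ho⟩ := hq
      rcases o with _ | D
      · simp only [Option.elim, Finset.mem_sigma, mem_filter, mem_powerset, mem_partsOf]
        exact ⟨⟨subset_rfl, hs0⟩, hQ⟩
      ·
        rcases mem_insert.1 ho with h | h
        · exact absurd h (by simp)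
        · obtain ⟨D', hD', hDD'⟩ := Finset.mem_image.1 h
          obtain ⟨hDQ, hs0D⟩ := mem_filter.1 hD'
          have : D' = D := by injection hDD'
          subst this
          simp only [Option.elim, Finset.mem_sigma, mem_filter, mem_powerset, mem_partsOf]
          exact ⟨⟨sdiff_subset, mem_sdiff.2 ⟨hs0, hs0D⟩⟩, isPartOf_erase hQ hDQ⟩
    · rintro ⟨B, P⟩ hq
      simp only [Finset.mem_sigma, mem_filter, mem_powerset, mem_partsOf] at hq
      obtain ⟨⟨hBS, hs0B⟩, hP⟩ := hq
      by_cases h : B = S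
      · subst h; simp
      · simp only [dif_neg h, Option.elim]
        have h1 : S \ (S \ B) = B := Finset.sdiff_sdiff_eq_self hBS
        have h2 : (insert (S \ B) P).erase (S \ B) = P :=
          Finset.erase_insert (sdiff_not_mem hP hBS h)
        simp [h1, h2]
    · rintro ⟨Q, o⟩ hq
      simp only [Finset.mem_sigma, mem_partsOf] at hq
      obtain ⟨hQ, ho⟩ := hq
      rcases o with _ | D
      · simp
      ·
        rcases mem_insert.1 ho with h | h
        · exact absurd h (by simp)
        · obtain ⟨D', hD', hDD'⟩ := Finset.mem_image.1 h
          obtain ⟨hDQ, hs0D⟩ := mem_filter.1 hD'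
          have hD'D : D' = D := by injection hDD'
          subst hD'D
          simp only [Option.elim]
          have hDS : D' ⊆ S := hQ.1 D' hDQ
          have hDne : D'.Nonempty := Finset.nonempty_iff_ne_empty.2 (fun h => hQ.2.1 (h ▸ hDQ))
          have h3 : ¬ (S \ D' = S) := by
            intro h
            obtain ⟨a, ha⟩ := hDne
            have : a ∈ S \ D' := h.symm ▸ hDS ha
            exact (mem_sdiff.1 this).2 ha
          have h4 : S \ (S \ D') = D' := Finset.sdiff_sdiff_eq_self hDS
          simp only [dif_neg h3, h4, Finset.insert_erase hDQ]
    · rintro ⟨B, P⟩ hq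
      simp only [Finset.mem_sigma, mem_filter, mem_powerset, mem_partsOf] at hq
      obtain ⟨⟨hBS, hs0B⟩, hP⟩ := hq
      by_cases h : B = S
      · subst h
        simp [hx0]
      · simp only [dif_neg h, Option.elim]
        rw [Finset.erase_insert (sdiff_not_mem hP hBS h)]
  rw [hmid, Finset.sum_sigma]
  have hper : ∀ Q ∈ partsOf S,
      (∑ o ∈ insert none ((Q.filter (fun D => s0 ∉ D)).image some),
        Option.elim o (wP x Q) (fun D => wP x (Q.erase D) * x D))
      = if Q = {S} then x S else 0 := by
    intro Q hQm
    have hQ := mem_partsOf.1 hQm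
    rw [Finset.sum_insert (by simp)]
    rw [Finset.sum_image (fun a _ b _ h => by injection h)]
    exact perQ_sum x hs0 hQ
  rw [Finset.sum_congr rfl hper, Finset.sum_ite_eq' (partsOf S) ({S} : Finset (Finset ι))]
  rw [if_pos (mem_partsOf.2 (singleton_isPartOf ⟨s0, hs0⟩))]

/-- Vanishing of cumulants for multiplicative `x`. -/
lemma cum_vanish (x : Finset ι → ℝ) (hx0 : x ∅ = 1) (T : Finset ι)
    (hmul : ∀ A : Finset ι, x A = x (A ∩ T) * x (A \ T)) :
    ∀ S : Finset ι, (S ∩ T).Nonempty → (S \ T).Nonempty → cumS x S = 0 := by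
  classical
  intro S
  induction S using Finset.strongInduction with
  | _ S IH =>
    intro h1 h2
    obtain ⟨s0, hs0i⟩ := h1
    have hs0S : s0 ∈ S := mem_of_mem_inter_left hs0i
    have hs0T : s0 ∈ T := mem_of_mem_inter_right hs0i
    have hrec := cum_recursion x hx0 hs0S
    have hSmem : S ∈ S.powerset.filter (fun B => s0 ∈ B) :=
      mem_filter.2 ⟨mem_powerset_self S, hs0S⟩
    rw [← Finset.add_sum_erase _ _ hSmem, Finset.sdiff_self, hx0, mul_one] at hrec
    -- hrec : cumS x S + ∑ B ∈ erase, cumS x B * x (S \ B) = x S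
    set P2 := (S ∩ T).powerset.filter (fun B => s0 ∈ B) with hP2
    have hsub : P2 ⊆ ((S.powerset.filter (fun B => s0 ∈ B)).erase S) := by
      intro B hB
      obtain ⟨hBp, hs0B⟩ := mem_filter.1 hB
      have hBST : B ⊆ S ∩ T := mem_powerset.1 hBp
      refine mem_erase.2 ⟨?_, mem_filter.2 ⟨mem_powerset.2 (hBST.trans inter_subset_left), hs0B⟩⟩
      intro h
      subst h
      obtain ⟨a, ha⟩ := h2
      exact (mem_sdiff.1 ha).2 (mem_inter.1 (hBST (mem_sdiff.1 ha).1)).2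
    have hvan : ∀ B ∈ (S.powerset.filter (fun B => s0 ∈ B)).erase S, B ∉ P2 →
        cumS x B * x (S \ B) = 0 := by
      intro B hB hBP2
      obtain ⟨hBne, hBf⟩ := mem_erase.1 hB
      obtain ⟨hBp, hs0B⟩ := mem_filter.1 hBf
      have hBS : B ⊆ S := mem_powerset.1 hBp
      have hBnotsub : ¬ B ⊆ S ∩ T := by
        intro h
        exact hBP2 (mem_filter.2 ⟨mem_powerset.2 h, hs0B⟩)
      have hBTne : (B \ T).Nonempty := by
        rw [Finset.sdiff_nonempty]
        intro h
        exact hBnotsub (Finset.subset_inter hBS h)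
      have hBTi : (B ∩ T).Nonempty := ⟨s0, mem_inter.2 ⟨hs0B, hs0T⟩⟩
      rw [IH B (Finset.ssubset_iff_subset_ne.2 ⟨hBS, hBne⟩) hBTi hBTne, zero_mul]
    rw [← Finset.sum_subset hsub hvan] at hrec
    -- now rewrite each x (S \ B) for B ∈ P2
    have hrw : ∀ B ∈ P2, cumS x B * x (S \ B) =
        cumS x B * x ((S ∩ T) \ B) * x (S \ T) := by
      intro B hB
      obtain ⟨hBp, _⟩ := mem_filter.1 hB
      have hBST : B ⊆ S ∩ T := mem_powerset.1 hBp
      have hBT : B ⊆ T := hBST.trans inter_subset_right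
      have e1 : (S \ B) ∩ T = (S ∩ T) \ B := by
        ext a; simp only [mem_inter, mem_sdiff]; tauto
      have e2 : (S \ B) \ T = S \ T := by
        ext a
        simp only [mem_sdiff]
        constructor
        · rintro ⟨⟨h1, _⟩, h2⟩; exact ⟨h1, h2⟩
        · rintro ⟨h1, h2⟩; exact ⟨⟨h1, fun hB' => h2 (hBT hB')⟩, h2⟩
      rw [hmul (S \ B), e1, e2, mul_assoc]
    rw [Finset.sum_congr rfl hrw] at hrec
    rw [← Finset.sum_mul] at hrec
    have hrec2 := cum_recursion x hx0 (mem_inter.2 ⟨hs0S, hs0T⟩ : s0 ∈ S ∩ T)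
    rw [← hP2] at hrec2
    rw [hrec2, hmul S] at hrec
    linarith
end PartA
open Finset


section Glue
variable {l : ℕ} {X : Type*} [Fintype X]

noncomputable def blockOf (P : Finset (Finset (Fin l))) (hP : IsPartOf Finset.univ P)
    (p : Fin l) : {B // B ∈ P} :=
  ⟨(hP.2.2 p (mem_univ p)).choose, (hP.2.2 p (mem_univ p)).choose_spec.1⟩

lemma mem_blockOf (P : Finset (Finset (Fin l))) (hP : IsPartOf Finset.univ P) (p : Fin l) :
    p ∈ (blockOf P hP p).1 :=
  (hP.2.2 p (mem_univ p)).choose_spec.2.1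

lemma blockOf_eq (P : Finset (Finset (Fin l))) (hP : IsPartOf Finset.univ P) {p : Fin l}
    {B : Finset (Fin l)} (hB : B ∈ P) (hpB : p ∈ B) : (blockOf P hP p : Finset (Fin l)) = B :=
  ((hP.2.2 p (mem_univ p)).choose_spec.2.2 B hB hpB).symm

lemma H_congr (P : Finset (Finset (Fin l))) (H : ∀ B : {B // B ∈ P}, ({p // p ∈ B.1} → X))
    {B₁ B₂ : Finset (Fin l)} (h₁ : B₁ ∈ P) (h₂ : B₂ ∈ P) (hB : B₁ = B₂) (p : Fin l)
    (hp₁ : p ∈ B₁) (hp₂ : p ∈ B₂) : H ⟨B₁, h₁⟩ ⟨p, hp₁⟩ = H ⟨B₂, h₂⟩ ⟨p, hp₂⟩ := by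
  subst hB; rfl

noncomputable def glueEquiv (P : Finset (Finset (Fin l))) (hP : IsPartOf Finset.univ P) :
    (∀ B : {B // B ∈ P}, ({p // p ∈ B.1} → X)) ≃ (Fin l → X) where
  toFun H p := H (blockOf P hP p) ⟨p, mem_blockOf P hP p⟩
  invFun e B q := e q.1
  left_inv H := by
    funext B q
    obtain ⟨B, hB⟩ := B
    obtain ⟨p, hp⟩ := q
    exact H_congr P H (blockOf P hP p).2 hB (blockOf_eq P hP hB hp) p (mem_blockOf P hP p) hp
  right_inv e := rfl

lemma glueEquiv_apply_mem (P : Finset (Finset (Fin l))) (hP : IsPartOf Finset.univ P)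
    (H : ∀ B : {B // B ∈ P}, ({p // p ∈ B.1} → X)) {p : Fin l} {B : Finset (Fin l)}
    (hB : B ∈ P) (hp : p ∈ B) :
    glueEquiv P hP H p = H ⟨B, hB⟩ ⟨p, hp⟩ := by
  conv_rhs => rw [← (glueEquiv (X := X) P hP).symm_apply_apply H]
  rfl

lemma glue_sum (P : Finset (Finset (Fin l))) (hP : IsPartOf Finset.univ P) (x₀ : Fin l → X)
    (g : Finset (Fin l) → (Fin l → X) → ℝ)
    (hloc : ∀ B ∈ P, ∀ e₁ e₂ : Fin l → X, (∀ p ∈ B, e₁ p = e₂ p) → g B e₁ = g B e₂) :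
    (∑ e : Fin l → X, ∏ B ∈ P, g B e)
      = ∏ B ∈ P.attach, ∑ h : ({p // p ∈ B.1} → X),
          g B.1 (fun p => if hp : p ∈ B.1 then h ⟨p, hp⟩ else x₀ p) := by
  classical
  have key : ∀ H : (∀ B : {B // B ∈ P}, ({p // p ∈ B.1} → X)),
      (∏ B : {B // B ∈ P}, g B.1
        (fun p => if hp : p ∈ B.1 then (H B) ⟨p, hp⟩ else x₀ p))
      = ∏ B ∈ P, g B (glueEquiv P hP H) := by
    intro H
    rw [← Finset.prod_attach P (fun B => g B (glueEquiv P hP H)), ← Finset.univ_eq_attach]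
    refine Finset.prod_congr rfl (fun B _ => ?_)
    refine hloc B.1 B.2 _ _ (fun p hp => ?_)
    rw [dif_pos hp, glueEquiv_apply_mem P hP H B.2 hp]
  calc (∑ e : Fin l → X, ∏ B ∈ P, g B e)
      = ∑ H : (∀ B : {B // B ∈ P}, ({p // p ∈ B.1} → X)),
          ∏ B : {B // B ∈ P}, g B.1
            (fun p => if hp : p ∈ B.1 then (H B) ⟨p, hp⟩ else x₀ p) :=
        (Fintype.sum_equiv (glueEquiv P hP) _ (fun e => ∏ B ∈ P, g B e) key).symm
    _ = ∏ B : {B // B ∈ P}, ∑ h : ({p // p ∈ B.1} → X),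
          g B.1 (fun p => if hp : p ∈ B.1 then h ⟨p, hp⟩ else x₀ p) := by
        have h2 := Finset.prod_univ_sum
          (κ := fun B : {B // B ∈ P} => ({p // p ∈ B.1} → X))
          (fun _ => Finset.univ)
          (fun B h => g B.1 (fun p => if hp : p ∈ B.1 then h ⟨p, hp⟩ else x₀ p))
        rw [Fintype.piFinset_univ] at h2
        exact h2.symm
    _ = ∏ B ∈ P.attach, ∑ h : ({p // p ∈ B.1} → X),
          g B.1 (fun p => if hp : p ∈ B.1 then h ⟨p, hp⟩ else x₀ p) := by
        rw [← Finset.univ_eq_attach]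
end Glue

section MG
variable {V : Type*} [Fintype V] {l : ℕ}

lemma sym2_cases {α : Type*} (z : Sym2 α) : ∃ x y, z = s(x, y) :=
  z.ind fun x y => ⟨x, y, rfl⟩

lemma sym2_exists_mem {α : Type*} (z : Sym2 α) : ∃ a, a ∈ z := by
  obtain ⟨x, y, rfl⟩ := sym2_cases z
  exact ⟨x, Sym2.mem_mk_left x y⟩

lemma sym2_map_congr {α β : Type*} {f g : α → β} {z : Sym2 α} (h : ∀ a ∈ z, f a = g a) :
    Sym2.map f z = Sym2.map g z := by
  obtain ⟨x, y, rfl⟩ := sym2_cases z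
  rw [Sym2.map_pair_eq, Sym2.map_pair_eq, h x (Sym2.mem_mk_left x y),
    h y (Sym2.mem_mk_right x y)]

lemma sym2_map_id_of_mem {α : Type*} {f : α → α} {z : Sym2 α} (h : ∀ a ∈ z, f a = a) :
    Sym2.map f z = z := by
  rw [sym2_map_congr (g := id) h, Sym2.map_id, id]

noncomputable def MSupp (e : Fin l → Sym2 V) : Finset V :=
  letI := Classical.decEq V
  Finset.univ.filter (fun v => ∃ p, v ∈ e p)

lemma mem_MSupp {e : Fin l → Sym2 V} {v : V} : v ∈ MSupp e ↔ ∃ p, v ∈ e p := by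
  classical
  simp [MSupp, Finset.filter_congr_decidable]

lemma mem_MSupp_of_mem {e : Fin l → Sym2 V} {v : V} {p : Fin l} (h : v ∈ e p) :
    v ∈ MSupp e := mem_MSupp.2 ⟨p, h⟩

noncomputable def mE (e : Fin l → Sym2 V) : ℕ := (MSupp e).card

noncomputable def etaE (e : Fin l → Sym2 V) : {v // v ∈ MSupp e} ≃ Fin (mE e) :=
  Fintype.equivFinOfCardEq (Fintype.card_coe _)

open Classical in
noncomputable def rhoE (e : Fin l → Sym2 V) (he : (MSupp e).Nonempty) : V → Fin (mE e) :=
  fun v => if h : v ∈ MSupp e then etaE e ⟨v, h⟩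
    else etaE e ⟨he.choose, he.choose_spec⟩

lemma rhoE_mem {e : Fin l → Sym2 V} (he : (MSupp e).Nonempty) {v : V} (h : v ∈ MSupp e) :
    rhoE e he v = etaE e ⟨v, h⟩ := by
  simp only [rhoE]; exact dif_pos h

lemma etaE_symm_rhoE {e : Fin l → Sym2 V} (he : (MSupp e).Nonempty) {v : V}
    (h : v ∈ MSupp e) : ((etaE e).symm (rhoE e he v) : V) = v := by
  rw [rhoE_mem he h, Equiv.symm_apply_apply]

noncomputable def FmgE (e : Fin l → Sym2 V) (he : (MSupp e).Nonempty) :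
    Fin l → Sym2 (Fin (mE e)) :=
  fun p => Sym2.map (rhoE e he) (e p)

lemma FmgE_map_back {e : Fin l → Sym2 V} (he : (MSupp e).Nonempty) (p : Fin l) :
    Sym2.map (fun i => ((etaE e).symm i : V)) (FmgE e he p) = e p := by
  rw [FmgE, Sym2.map_map]
  exact sym2_map_id_of_mem (fun v hv => etaE_symm_rhoE he (mem_MSupp_of_mem hv))

lemma FmgE_no_isolated {e : Fin l → Sym2 V} (he : (MSupp e).Nonempty) (w : Fin (mE e)) :
    ∃ p, w ∈ FmgE e he p := by
  obtain ⟨p, hp⟩ := mem_MSupp.1 ((etaE e).symm w).2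
  refine ⟨p, Sym2.mem_map.2 ⟨((etaE e).symm w : V), hp, ?_⟩⟩
  rw [rhoE_mem he ((etaE e).symm w).2]
  rw [show (⟨((etaE e).symm w : V), ((etaE e).symm w).2⟩ : {v // v ∈ MSupp e})
    = (etaE e).symm w from Subtype.ext rfl, Equiv.apply_symm_apply]

lemma FmgE_not_isDiag {e : Fin l → Sym2 V} (he : (MSupp e).Nonempty) {p : Fin l}
    (hp : ¬ (e p).IsDiag) : ¬ (FmgE e he p).IsDiag := by
  obtain ⟨x, y, hxy⟩ := sym2_cases (e p)
  rw [FmgE, hxy, Sym2.map_pair_eq, Sym2.mk_isDiag_iff]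
  intro h
  have hx : x ∈ MSupp e := mem_MSupp_of_mem (by rw [hxy]; exact Sym2.mem_mk_left x y)
  have hy : y ∈ MSupp e := mem_MSupp_of_mem (by rw [hxy]; exact Sym2.mem_mk_right x y)
  rw [rhoE_mem he hx, rhoE_mem he hy] at h
  have := (etaE e).injective h
  apply hp
  rw [hxy, Sym2.mk_isDiag_iff]
  exact congrArg Subtype.val this

/-- Transfer of constrained coloring counts from `V` to `Fin (mE e)`. -/
lemma card_colorings {k : ℕ} (e : Fin l → Sym2 V) (he : (MSupp e).Nonempty)
    (B : Finset (Fin l)) (ijs : Fin l → Sym2 (Fin k)) :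
    Nat.card {C : V → Fin k // ∀ p ∈ B, Sym2.map C (e p) = ijs p}
      = Nat.card {c : Fin (mE e) → Fin k // ∀ p ∈ B, Sym2.map c (FmgE e he p) = ijs p}
        * k ^ (Fintype.card V - mE e) := by
  classical
  have hEquiv : {C : V → Fin k // ∀ p ∈ B, Sym2.map C (e p) = ijs p}
      ≃ {c : Fin (mE e) → Fin k // ∀ p ∈ B, Sym2.map c (FmgE e he p) = ijs p}
        × ({v : V // v ∉ MSupp e} → Fin k) := by
    refine ⟨fun C => ⟨⟨fun i => C.1 ((etaE e).symm i : V), ?_⟩, fun v => C.1 v.1⟩,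
      fun cd => ⟨fun v => if h : v ∈ MSupp e then cd.1.1 (etaE e ⟨v, h⟩) else cd.2 ⟨v, h⟩, ?_⟩,
      ?_, ?_⟩
    · intro p hp
      rw [FmgE, Sym2.map_map]
      rw [show (((fun i => C.1 ((etaE e).symm i : V)) ∘ rhoE e he)) = fun v =>
        C.1 (((etaE e).symm (rhoE e he v) : V)) from rfl]
      rw [sym2_map_congr (g := C.1) (fun v hv => by
        rw [etaE_symm_rhoE he (mem_MSupp_of_mem hv)])]
      exact C.2 p hp
    · intro p hp
      have : Sym2.map (fun v => if h : v ∈ MSupp e then cd.1.1 (etaE e ⟨v, h⟩) else cd.2 ⟨v, h⟩)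
          (e p) = Sym2.map (cd.1.1 ∘ rhoE e he) (e p) := by
        refine sym2_map_congr (fun v hv => ?_)
        have hv' : v ∈ MSupp e := mem_MSupp_of_mem hv
        rw [dif_pos hv']
        show cd.1.1 (etaE e ⟨v, hv'⟩) = cd.1.1 (rhoE e he v)
        rw [rhoE_mem he hv']
      rw [this, ← Sym2.map_map]
      exact cd.1.2 p hp
    · intro C
      refine Subtype.ext (funext fun v => ?_)
      by_cases h : v ∈ MSupp e
      · simp only [dif_pos h]
        rw [show ((etaE e).symm (etaE e ⟨v, h⟩) : V) = v by rw [Equiv.symm_apply_apply]]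
      · simp only [dif_neg h]
    · intro cd
      refine Prod.ext ?_ ?_
      · refine Subtype.ext (funext fun i => ?_)
        simp only
        rw [dif_pos ((etaE e).symm i).2]
        rw [show (⟨((etaE e).symm i : V), ((etaE e).symm i).2⟩ : {v // v ∈ MSupp e})
          = (etaE e).symm i from Subtype.ext rfl, Equiv.apply_symm_apply]
      · refine funext fun v => ?_
        simp only
        rw [dif_neg v.2]
  rw [Nat.card_congr hEquiv, Nat.card_prod]
  congr 1
  rw [Nat.card_fun, Nat.card_eq_fintype_card, Nat.card_eq_fintype_card,
    Fintype.card_subtype_compl, Fintype.card_fin, Fintype.card_coe]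
  rfl
end MG

section Iso
open Finset

lemma mgIso_map_symm {l m₁ m₂ : ℕ} {F₁ : Fin l → Sym2 (Fin m₁)} {F₂ : Fin l → Sym2 (Fin m₂)}
    {φ : Fin m₁ ≃ Fin m₂} (hφ : ∀ p, Sym2.map φ (F₁ p) = F₂ p) (p : Fin l) :
    Sym2.map φ.symm (F₂ p) = F₁ p := by
  rw [← hφ p, Sym2.map_map]
  exact sym2_map_id_of_mem (fun a _ => Equiv.symm_apply_apply φ a)

lemma mgIso_symm {l m₁ m₂ : ℕ} {F₁ : Fin l → Sym2 (Fin m₁)} {F₂ : Fin l → Sym2 (Fin m₂)}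
    (h : MGIso F₁ F₂) : MGIso F₂ F₁ := by
  obtain ⟨φ, hφ⟩ := h
  exact ⟨φ.symm, mgIso_map_symm hφ⟩

lemma goodMG_of_iso {l m₁ m₂ : ℕ} {F₁ : Fin l → Sym2 (Fin m₁)} {F₂ : Fin l → Sym2 (Fin m₂)}
    (h : MGIso F₁ F₂) (hG : GoodMG F₁) : GoodMG F₂ := by
  obtain ⟨φ, hφ⟩ := h
  refine ⟨?_, ?_, ?_⟩
  · intro w
    obtain ⟨p, hp⟩ := hG.1 (φ.symm w)
    exact ⟨p, by rw [← hφ p]; exact Sym2.mem_map.2 ⟨φ.symm w, hp, Equiv.apply_symm_apply φ w⟩⟩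
  · intro p hd
    apply hG.2.1 p
    rw [← hφ p] at hd
    obtain ⟨x, y, hxy⟩ := sym2_cases (F₁ p)
    rw [hxy, Sym2.map_pair_eq, Sym2.mk_isDiag_iff] at hd
    rw [hxy, Sym2.mk_isDiag_iff]
    exact φ.injective hd
  · refine SimpleGraph.Connected.map ⟨(φ : Fin m₁ → Fin m₂), ?_⟩ φ.surjective hG.2.2
    intro a b hab
    rw [SimpleGraph.fromEdgeSet_adj] at hab ⊢
    obtain ⟨⟨p, hp⟩, hne⟩ := hab
    refine ⟨⟨p, ?_⟩, fun h => hne (φ.injective h)⟩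
    rw [← hφ p, hp, Sym2.map_pair_eq]

lemma xVal_iso {l m₁ m₂ k : ℕ} {F₁ : Fin l → Sym2 (Fin m₁)} {F₂ : Fin l → Sym2 (Fin m₂)}
    (h : MGIso F₁ F₂) (S : Finset (Fin l)) (ij : Fin l → Sym2 (Fin k)) :
    xVal F₁ S ij = xVal F₂ S ij := by
  obtain ⟨φ, hφ⟩ := h
  have hm : m₁ = m₂ := by simpa using Fintype.card_congr φ
  rw [xVal, xVal]
  have hcard : Nat.card {c : Fin m₁ → Fin k // ∀ p ∈ S, Sym2.map c (F₁ p) = ij p}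
      = Nat.card {c : Fin m₂ → Fin k // ∀ p ∈ S, Sym2.map c (F₂ p) = ij p} := by
    refine Nat.card_congr ⟨fun c => ⟨c.1 ∘ φ.symm, fun p hp => ?_⟩,
      fun d => ⟨d.1 ∘ φ, fun p hp => ?_⟩, fun c => ?_, fun d => ?_⟩
    · rw [← Sym2.map_map, mgIso_map_symm hφ p]
      exact c.2 p hp
    · rw [← Sym2.map_map, hφ p]
      exact d.2 p hp
    · refine Subtype.ext (funext fun v => ?_)
      simp
    · refine Subtype.ext (funext fun v => ?_)
      simp
  rw [hcard, Fintype.card_fin, Fintype.card_fin, hm]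

lemma isSetPartition_iff_isPartOf {l : ℕ} (P : Finset (Finset (Fin l))) :
    IsSetPartition P ↔ IsPartOf Finset.univ P := by
  constructor
  · rintro ⟨h1, h2⟩
    exact ⟨fun B _ => Finset.subset_univ B, h1, fun i _ => h2 i⟩
  · rintro ⟨h0, h1, h2⟩
    exact ⟨h1, fun i => h2 i (Finset.mem_univ i)⟩

open Classical in
lemma sumPartitions_eq_cumS {l : ℕ} (x : Finset (Fin l) → ℝ) :
    (∑ P ∈ Finset.univ.filter (fun P : Finset (Finset (Fin l)) => IsSetPartition P),
      (-1 : ℝ) ^ (P.card - 1) * (Nat.factorial (P.card - 1) : ℝ) * ∏ B ∈ P, x B)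
      = cumS x Finset.univ := by
  classical
  rw [cumS, partsOf]
  refine Finset.sum_congr ?_ (fun _ _ => rfl)
  ext P
  simp only [Finset.mem_filter, Finset.mem_univ, true_and]
  exact isSetPartition_iff_isPartOf P

lemma kappaFJ_eq_cumS {l m k : ℕ} (F : Fin l → Sym2 (Fin m)) (ij : Fin l → Sym2 (Fin k)) :
    kappaFJ F ij = cumS (fun S => xVal F S ij) Finset.univ := by
  rw [kappaFJ]
  exact sumPartitions_eq_cumS (fun S => xVal F S ij)

lemma kappaFJ_iso {l m₁ m₂ k : ℕ} {F₁ : Fin l → Sym2 (Fin m₁)} {F₂ : Fin l → Sym2 (Fin m₂)}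
    (h : MGIso F₁ F₂) (ij : Fin l → Sym2 (Fin k)) : kappaFJ F₁ ij = kappaFJ F₂ ij := by
  rw [kappaFJ_eq_cumS, kappaFJ_eq_cumS]
  have : (fun S => xVal F₁ S ij) = (fun S => xVal F₂ S ij) :=
    funext fun S => xVal_iso h S ij
  rw [this]

lemma xVal_empty {m l k : ℕ} (hk : 0 < k) (F : Fin l → Sym2 (Fin m))
    (ij : Fin l → Sym2 (Fin k)) : xVal F ∅ ij = 1 := by
  rw [xVal]
  have h1 : Nat.card {c : Fin m → Fin k // ∀ p ∈ (∅ : Finset (Fin l)),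
      Sym2.map c (F p) = ij p} = Nat.card (Fin m → Fin k) := by
    refine Nat.card_congr (Equiv.subtypeUnivEquiv ?_)
    intro c p hp
    exact absurd hp (Finset.notMem_empty p)
  rw [h1, Nat.card_fun, Nat.card_eq_fintype_card, Nat.card_eq_fintype_card,
    Fintype.card_fin, Fintype.card_fin]
  have hne : ((k : ℝ)) ^ m ≠ 0 := by positivity
  push_cast
  rw [div_self hne]

/-- Two vertices both incident to a non-diagonal edge are reachable. -/
lemma reach_of_both_mem {m l : ℕ} {F : Fin l → Sym2 (Fin m)} (hdiag : ∀ p, ¬ (F p).IsDiag)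
    {p : Fin l} {v w : Fin m} (hv : v ∈ F p) (hw : w ∈ F p) :
    (SimpleGraph.fromEdgeSet (Set.range F)).Reachable v w := by
  by_cases hvw : v = w
  · exact hvw ▸ SimpleGraph.Reachable.refl v
  · refine SimpleGraph.Adj.reachable ?_
    rw [SimpleGraph.fromEdgeSet_adj]
    refine ⟨⟨p, ?_⟩, hvw⟩
    obtain ⟨x, y, hxy⟩ := sym2_cases (F p)
    have hne : x ≠ y := by
      intro h
      apply hdiag p
      rw [hxy, Sym2.mk_isDiag_iff]
      exact h
    rw [hxy] at hv hw ⊢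
    rw [Sym2.mem_iff] at hv hw
    rcases hv with rfl | rfl <;> rcases hw with rfl | rfl
    · exact absurd rfl hvw
    · rfl
    · exact Sym2.eq_swap
    · exact absurd rfl hvw

/-- Multiplicativity of `xVal` over a union of connected components. -/
lemma xVal_mult {m l k : ℕ} (hk : 0 < k) (F : Fin l → Sym2 (Fin m))
    (ij : Fin l → Sym2 (Fin k)) (T : Finset (Fin l))
    (hdisj : ∀ v : Fin m, ∀ p ∈ T, ∀ q ∉ T, v ∈ F p → v ∈ F q → False)
    (S : Finset (Fin l)) :
    xVal F S ij = xVal F (S ∩ T) ij * xVal F (S \ T) ij := by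
  classical
  set inA : Fin m → Prop := fun v => ∃ p ∈ T, v ∈ F p with hinA
  have hAT : ∀ p ∈ T, ∀ v ∈ F p, inA v := fun p hp v hv => ⟨p, hp, hv⟩
  have hAnT : ∀ q ∉ T, ∀ v ∈ F q, ¬ inA v := by
    rintro q hq v hv ⟨p, hp, hvp⟩
    exact hdisj v p hp q hq hvp hv
  have hcard : Nat.card {c : Fin m → Fin k // ∀ p ∈ S ∩ T, Sym2.map c (F p) = ij p}
      * Nat.card {c : Fin m → Fin k // ∀ p ∈ S \ T, Sym2.map c (F p) = ij p}
      = Nat.card {c : Fin m → Fin k // ∀ p ∈ S, Sym2.map c (F p) = ij p}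
      * Nat.card (Fin m → Fin k) := by
    rw [← Nat.card_prod, ← Nat.card_prod]
    refine Nat.card_congr ⟨
      fun cd => ⟨⟨fun v => if inA v then cd.1.1 v else cd.2.1 v, ?_⟩,
        fun v => if inA v then cd.2.1 v else cd.1.1 v⟩,
      fun cd => ⟨⟨fun v => if inA v then cd.1.1 v else cd.2 v, ?_⟩,
        ⟨fun v => if inA v then cd.2 v else cd.1.1 v, ?_⟩⟩, ?_, ?_⟩
    · intro p hp
      by_cases hpT : p ∈ T
      · rw [sym2_map_congr (g := cd.1.1) (fun v hv => if_pos (hAT p hpT v hv))]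
        exact cd.1.2 p (Finset.mem_inter.2 ⟨hp, hpT⟩)
      · rw [sym2_map_congr (g := cd.2.1) (fun v hv => if_neg (hAnT p hpT v hv))]
        exact cd.2.2 p (Finset.mem_sdiff.2 ⟨hp, hpT⟩)
    · intro p hp
      obtain ⟨hpS, hpT⟩ := Finset.mem_inter.1 hp
      rw [sym2_map_congr (g := cd.1.1) (fun v hv => if_pos (hAT p hpT v hv))]
      exact cd.1.2 p hpS
    · intro p hp
      obtain ⟨hpS, hpT⟩ := Finset.mem_sdiff.1 hp
      rw [sym2_map_congr (g := cd.1.1) (fun v hv => if_neg (hAnT p hpT v hv))]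
      exact cd.1.2 p hpS
    · intro cd
      refine Prod.ext (Subtype.ext (funext fun v => ?_)) (Subtype.ext (funext fun v => ?_)) <;>
        · by_cases h : inA v <;> simp [h]
    · intro cd
      refine Prod.ext (Subtype.ext (funext fun v => ?_)) (funext fun v => ?_) <;>
        · by_cases h : inA v <;> simp [h]
  rw [xVal, xVal, xVal]
  simp only [Fintype.card_fin]
  rw [div_mul_div_comm, div_eq_div_iff (by positivity) (by positivity)]
  rw [Nat.card_fun] at hcard
  simp only [Nat.card_eq_fintype_card, Fintype.card_fin] at hcard ⊢
  have hcast := congrArg (fun n : ℕ => (n : ℝ)) hcard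
  push_cast at hcast
  linear_combination (-((k:ℝ) ^ m)) * hcast

/-- `kappaFJ` vanishes for disconnected multigraphs without isolated vertices. -/
lemma kappa_disconnected {m k l : ℕ} (hk : 0 < k) (hl : 0 < l) (F : Fin l → Sym2 (Fin m))
    (hiso : ∀ w : Fin m, ∃ p, w ∈ F p) (hdiag : ∀ p, ¬ (F p).IsDiag)
    (hconn : ¬ (SimpleGraph.fromEdgeSet (Set.range F)).Connected)
    (ij : Fin l → Sym2 (Fin k)) : kappaFJ F ij = 0 := by
  classical
  rw [kappaFJ_eq_cumS]
  have hm : 0 < m := by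
    obtain ⟨a, _⟩ := sym2_exists_mem (F ⟨0, hl⟩)
    exact a.pos
  have hpre : ¬ (SimpleGraph.fromEdgeSet (Set.range F)).Preconnected := by
    intro h
    haveI : Nonempty (Fin m) := ⟨⟨0, hm⟩⟩
    exact hconn ⟨h⟩
  simp only [SimpleGraph.Preconnected] at hpre
  push_neg at hpre
  obtain ⟨u, w, hr⟩ := hpre
  set T : Finset (Fin l) := Finset.univ.filter
    (fun p => ∃ v ∈ F p, (SimpleGraph.fromEdgeSet (Set.range F)).Reachable u v) with hT
  have hT1 : ∀ p ∈ T, ∀ v ∈ F p, (SimpleGraph.fromEdgeSet (Set.range F)).Reachable u v := by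
    intro p hp v hv
    obtain ⟨v₀, hv₀, hr₀⟩ := (Finset.mem_filter.1 hp).2
    exact hr₀.trans (reach_of_both_mem hdiag hv₀ hv)
  have hdisjT : ∀ v : Fin m, ∀ p ∈ T, ∀ q ∉ T, v ∈ F p → v ∈ F q → False := by
    intro v p hp q hq hvp hvq
    exact hq (Finset.mem_filter.2 ⟨Finset.mem_univ q, ⟨v, hvq, hT1 p hp v hvp⟩⟩)
  have h1 : ((Finset.univ : Finset (Fin l)) ∩ T).Nonempty := by
    rw [Finset.univ_inter]
    obtain ⟨p₀, hp₀⟩ := hiso u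
    exact ⟨p₀, Finset.mem_filter.2 ⟨Finset.mem_univ p₀, ⟨u, hp₀, SimpleGraph.Reachable.refl u⟩⟩⟩
  have h2 : ((Finset.univ : Finset (Fin l)) \ T).Nonempty := by
    obtain ⟨q₀, hq₀⟩ := hiso w
    refine ⟨q₀, Finset.mem_sdiff.2 ⟨Finset.mem_univ q₀, fun hmem => ?_⟩⟩
    exact hr (hT1 q₀ hmem w hq₀)
  exact cum_vanish (fun S => xVal F S ij) (xVal_empty hk F ij) T
    (fun A => xVal_mult hk F ij T hdisjT A) Finset.univ h1 h2
end Iso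

section Pred
open Finset
variable {V : Type*} [Fintype V] {l : ℕ}

lemma pred_forward {e : Fin l → Sym2 V} (he : (MSupp e).Nonempty) {m₀ : ℕ}
    {F₀ : Fin l → Sym2 (Fin m₀)} (hF₀ : GoodMG F₀)
    (h : ∃ φ : Fin m₀ ↪ V, ∀ p, e p = Sym2.map φ (F₀ p)) :
    GoodMG (FmgE e he) ∧ MGIso (FmgE e he) F₀ := by
  obtain ⟨φ, hφ⟩ := h
  have hmem : ∀ w : Fin m₀, φ w ∈ MSupp e := by
    intro w
    obtain ⟨p, hp⟩ := hF₀.1 w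
    exact mem_MSupp_of_mem (p := p) (by rw [hφ p]; exact Sym2.mem_map.2 ⟨w, hp, rfl⟩)
  have hsurj : ∀ v ∈ MSupp e, ∃ w, φ w = v := by
    intro v hv
    obtain ⟨p, hp⟩ := mem_MSupp.1 hv
    rw [hφ p] at hp
    obtain ⟨w, _, hw⟩ := Sym2.mem_map.1 hp
    exact ⟨w, hw⟩
  set θ : Fin m₀ → Fin (mE e) := fun w => rhoE e he (φ w) with hθ
  have hθinj : Function.Injective θ := by
    intro w₁ w₂ hw
    simp only [hθ] at hw
    rw [rhoE_mem he (hmem w₁), rhoE_mem he (hmem w₂)] at hw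
    have h2 := (etaE e).injective hw
    exact φ.injective (congrArg Subtype.val h2)
  have hθsurj : Function.Surjective θ := by
    intro i
    obtain ⟨w, hw⟩ := hsurj ((etaE e).symm i : V) ((etaE e).symm i).2
    refine ⟨w, ?_⟩
    have h3 : θ w = etaE e ⟨((etaE e).symm i : V), ((etaE e).symm i).2⟩ := by
      simp only [hθ]
      rw [hw]
      exact rhoE_mem he _
    rw [h3, show (⟨((etaE e).symm i : V), ((etaE e).symm i).2⟩ : {v // v ∈ MSupp e})
      = (etaE e).symm i from Subtype.ext rfl, Equiv.apply_symm_apply]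
  have hiso0 : MGIso F₀ (FmgE e he) := by
    refine ⟨Equiv.ofBijective θ ⟨hθinj, hθsurj⟩, fun p => ?_⟩
    show Sym2.map θ (F₀ p) = Sym2.map (rhoE e he) (e p)
    rw [hφ p, Sym2.map_map]
    rfl
  exact ⟨goodMG_of_iso hiso0 hF₀, mgIso_symm hiso0⟩

lemma pred_backward {e : Fin l → Sym2 V} (he : (MSupp e).Nonempty) {m₀ : ℕ}
    {F₀ : Fin l → Sym2 (Fin m₀)} (h : MGIso (FmgE e he) F₀) :
    ∃ φ : Fin m₀ ↪ V, ∀ p, e p = Sym2.map φ (F₀ p) := by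
  obtain ⟨ψ, hψ⟩ := h
  refine ⟨⟨fun w => ((etaE e).symm (ψ.symm w) : V), ?_⟩, fun p => ?_⟩
  · intro w₁ w₂ hw
    exact ψ.symm.injective ((etaE e).symm.injective (Subtype.ext hw))
  · rw [← hψ p]
    show e p = Sym2.map (fun w => ((etaE e).symm (ψ.symm w) : V))
      (Sym2.map ψ (Sym2.map (rhoE e he) (e p)))
    rw [Sym2.map_map, Sym2.map_map]
    refine (sym2_map_id_of_mem (fun v hv => ?_)).symm
    show ((etaE e).symm (ψ.symm (ψ (rhoE e he v))) : V) = v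
    rw [Equiv.symm_apply_apply]
    exact etaE_symm_rhoE he (mem_MSupp_of_mem hv)
end Pred

section NfunDsec
open Finset

noncomputable def NfunD (V : Type*) [Fintype V] {l k : ℕ} (ijs : Fin l → Sym2 (Fin k))
    (e : Fin l → Sym2 V) (B : Finset (Fin l)) : ℕ :=
  Nat.card {C : V → Fin k // ∀ p ∈ B, Sym2.map C (e p) = ijs p}

lemma NfunD_local {V : Type*} [Fintype V] {l k : ℕ} (ijs : Fin l → Sym2 (Fin k))
    {e₁ e₂ : Fin l → Sym2 V} {B : Finset (Fin l)} (h : ∀ p ∈ B, e₁ p = e₂ p) :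
    NfunD V ijs e₁ B = NfunD V ijs e₂ B :=
  Nat.card_congr (Equiv.subtypeEquivRight (fun C => by
    constructor <;> intro hc p hp
    · rw [← h p hp]; exact hc p hp
    · rw [h p hp]; exact hc p hp))

open Classical in
lemma NfunD_cast_sum {V : Type*} [Fintype V] {l k : ℕ} (ijs : Fin l → Sym2 (Fin k))
    (e : Fin l → Sym2 V) (B : Finset (Fin l)) :
    ((NfunD V ijs e B : ℝ)) = ∑ C : V → Fin k, ∏ p ∈ B,
      (if Sym2.map C (e p) = ijs p then (1:ℝ) else 0) := by
  classical
  rw [NfunD, Nat.card_eq_fintype_card, Fintype.card_subtype, Finset.card_filter]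
  push_cast
  refine Finset.sum_congr rfl fun C _ => ?_
  rw [Finset.prod_boole]
  simp

lemma NfunD_xVal {V : Type*} [Fintype V] {l k : ℕ} (hk : 0 < k) (ijs : Fin l → Sym2 (Fin k))
    (e : Fin l → Sym2 V) (he : (MSupp e).Nonempty) (B : Finset (Fin l)) :
    (NfunD V ijs e B : ℝ) / (k : ℝ) ^ (Fintype.card V) = xVal (FmgE e he) B ijs := by
  rw [NfunD, card_colorings e he B ijs, xVal]
  simp only [Fintype.card_fin]
  have hm : mE e ≤ Fintype.card V := Finset.card_le_univ _
  have hsplit : (k : ℝ) ^ (Fintype.card V) = (k : ℝ) ^ (mE e) * (k : ℝ) ^ (Fintype.card V - mE e) := by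
    rw [← pow_add]
    congr 1
    omega
  have hc : ((k : ℝ) ^ (Fintype.card V - mE e)) ≠ 0 := by positivity
  rw [hsplit]
  push_cast
  rw [mul_div_mul_right _ _ hc]

open Classical in
lemma sum_ind_eCount {V : Type*} [Fintype V] (G : SimpleGraph V) {k : ℕ}
    (C : V → Fin k) (i j : Fin k) :
    (∑ s : Sym2 V, (if s ∈ G.edgeFinset then (1:ℝ) else 0) *
      (if Sym2.map C s = s(i, j) then (1:ℝ) else 0)) = (eCount G C i j : ℝ) := by
  classical
  have h1 : ∀ s : Sym2 V, (if s ∈ G.edgeFinset then (1:ℝ) else 0) *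
      (if Sym2.map C s = s(i, j) then (1:ℝ) else 0)
      = if (s ∈ G.edgeFinset ∧ Sym2.map C s = s(i, j)) then (1:ℝ) else 0 := by
    intro s
    by_cases h1 : s ∈ G.edgeFinset <;> by_cases h2 : Sym2.map C s = s(i, j) <;>
      simp [h1, h2]
  rw [Finset.sum_congr rfl (fun s _ => h1 s), Finset.sum_boole]
  simp only [eCount]
  norm_cast
  congr 1
  ext s
  simp only [Finset.mem_filter, Finset.mem_univ, true_and]
end NfunDsec

section E1sec
open Finset

open Classical in
lemma E1 {V : Type*} [Fintype V] [Nonempty V] (G : SimpleGraph V) {k l : ℕ}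
    (ij : Fin l → Fin k × Fin k) {P : Finset (Finset (Fin l))} (hP : IsPartOf Finset.univ P) :
    ∏ B ∈ P, colorExp k (fun C => ∏ p ∈ B, (eCount G C (ij p).1 (ij p).2 : ℝ))
      = ∑ e ∈ (Finset.univ : Finset (Fin l → Sym2 V)).filter
          (fun e => ∀ p, e p ∈ G.edgeFinset),
          ∏ B ∈ P, (NfunD V (fun p => s((ij p).1, (ij p).2)) e B : ℝ)
            / (k : ℝ) ^ (Fintype.card V) := by
  classical
  set ijs : Fin l → Sym2 (Fin k) := fun p => s((ij p).1, (ij p).2) with hijs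
  set n := Fintype.card V with hn
  set g : Finset (Fin l) → (Fin l → Sym2 V) → ℝ := fun B e =>
    (∏ p ∈ B, (if e p ∈ G.edgeFinset then (1:ℝ) else 0)) *
      ((NfunD V ijs e B : ℝ) / (k : ℝ) ^ n) with hg
  have hloc : ∀ B ∈ P, ∀ e₁ e₂ : Fin l → Sym2 V, (∀ p ∈ B, e₁ p = e₂ p) → g B e₁ = g B e₂ := by
    intro B _ e₁ e₂ h
    simp only [hg]
    rw [NfunD_local ijs h, Finset.prod_congr rfl (fun p hp => by rw [h p hp])]
  obtain ⟨v₀⟩ := ‹Nonempty V›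
  have ha : (∑ e ∈ (Finset.univ : Finset (Fin l → Sym2 V)).filter
        (fun e => ∀ p, e p ∈ G.edgeFinset),
        ∏ B ∈ P, (NfunD V ijs e B : ℝ) / (k : ℝ) ^ n)
      = ∑ e : Fin l → Sym2 V, ∏ B ∈ P, g B e := by
    rw [Finset.sum_filter]
    refine Finset.sum_congr rfl fun e _ => ?_
    by_cases hc : ∀ p, e p ∈ G.edgeFinset
    · rw [if_pos hc]
      refine Finset.prod_congr rfl fun B _ => ?_
      simp only [hg]
      rw [Finset.prod_congr rfl (fun p _ => if_pos (hc p)), Finset.prod_const_one, one_mul]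
    · rw [if_neg hc]
      push_neg at hc
      obtain ⟨p₀, hp₀⟩ := hc
      refine (Finset.prod_eq_zero (blockOf P hP p₀).2 ?_).symm
      simp only [hg]
      have hz : (∏ p ∈ (blockOf P hP p₀ : Finset (Fin l)),
          if e p ∈ G.edgeFinset then (1:ℝ) else 0) = 0 :=
        Finset.prod_eq_zero (mem_blockOf P hP p₀) (if_neg hp₀)
      rw [hz, zero_mul]
  set x0 : Fin l → Sym2 V := fun _ => s(v₀, v₀) with hx0
  rw [ha, glue_sum P hP x0 g hloc]
  rw [← Finset.prod_attach P (fun B => colorExp k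
    (fun C => ∏ p ∈ B, (eCount G C (ij p).1 (ij p).2 : ℝ)))]
  refine Finset.prod_congr rfl fun B _ => ?_
  have key : ∀ h : {p // p ∈ B.1} → Sym2 V,
      g B.1 (fun p => if hp : p ∈ B.1 then h ⟨p, hp⟩ else x0 p)
      = (∑ C : V → Fin k, ∏ q ∈ B.1.attach,
          ((if h q ∈ G.edgeFinset then (1:ℝ) else 0) *
            (if Sym2.map C (h q) = ijs q.1 then (1:ℝ) else 0))) / (k : ℝ) ^ n := by
    intro h
    have hE : (∏ q ∈ B.1.attach, (if h q ∈ G.edgeFinset then (1:ℝ) else 0))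
        = ∏ p ∈ B.1, (if (if hp : p ∈ B.1 then h ⟨p, hp⟩ else x0 p) ∈ G.edgeFinset
            then (1:ℝ) else 0) := by
      rw [← Finset.prod_attach B.1 (fun p =>
        (if (if hp : p ∈ B.1 then h ⟨p, hp⟩ else x0 p) ∈ G.edgeFinset then (1:ℝ) else 0))]
      refine Finset.prod_congr rfl fun q _ => ?_
      rw [dif_pos q.2]
    have hC : ∀ C : V → Fin k,
        (∏ q ∈ B.1.attach, (if Sym2.map C (h q) = ijs q.1 then (1:ℝ) else 0))
        = ∏ p ∈ B.1, (if Sym2.map C (if hp : p ∈ B.1 then h ⟨p, hp⟩ else x0 p) = ijs p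
            then (1:ℝ) else 0) := by
      intro C
      rw [← Finset.prod_attach B.1 (fun p =>
        (if Sym2.map C (if hp : p ∈ B.1 then h ⟨p, hp⟩ else x0 p) = ijs p
          then (1:ℝ) else 0))]
      refine Finset.prod_congr rfl fun q _ => ?_
      rw [dif_pos q.2]
    simp only [hg]
    rw [NfunD_cast_sum, ← mul_div_assoc]
    congr 1
    rw [Finset.mul_sum]
    refine Finset.sum_congr rfl fun C _ => ?_
    rw [← hE, ← hC C, ← Finset.prod_mul_distrib]
  symm
  rw [Finset.sum_congr rfl (fun h _ => key h), ← Finset.sum_div, Finset.sum_comm]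
  have swap : ∀ C : V → Fin k,
      (∑ h : {p // p ∈ B.1} → Sym2 V, ∏ q ∈ B.1.attach,
        ((if h q ∈ G.edgeFinset then (1:ℝ) else 0) *
          (if Sym2.map C (h q) = ijs q.1 then (1:ℝ) else 0)))
      = ∏ q ∈ B.1.attach, ∑ s : Sym2 V,
          ((if s ∈ G.edgeFinset then (1:ℝ) else 0) *
            (if Sym2.map C s = ijs q.1 then (1:ℝ) else 0)) := by
    intro C
    rw [← Finset.univ_eq_attach]
    have h2 := Finset.prod_univ_sum (κ := fun _ : {p // p ∈ B.1} => Sym2 V)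
      (fun _ => Finset.univ)
      (fun q s => (if s ∈ G.edgeFinset then (1:ℝ) else 0) *
        (if Sym2.map C s = ijs q.1 then (1:ℝ) else 0))
    rw [Fintype.piFinset_univ] at h2
    exact h2.symm
  rw [Finset.sum_congr rfl (fun C _ => swap C)]
  have ecnt : ∀ C : V → Fin k, ∀ q : {p // p ∈ B.1},
      (∑ s : Sym2 V, ((if s ∈ G.edgeFinset then (1:ℝ) else 0) *
        (if Sym2.map C s = ijs q.1 then (1:ℝ) else 0)))
      = (eCount G C (ij q.1).1 (ij q.1).2 : ℝ) := by
    intro C q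
    simp only [hijs]
    exact sum_ind_eCount G C (ij q.1).1 (ij q.1).2
  rw [Finset.sum_congr rfl (fun C _ => Finset.prod_congr rfl (fun q _ => ecnt C q))]
  rw [Finset.sum_congr rfl (fun C _ => Finset.prod_attach B.1
    (fun p => (eCount G C (ij p).1 (ij p).2 : ℝ)))]
  rw [colorExp, hn]
end E1sec

set_option maxHeartbeats 2000000 in
/-- `κ(v(G)·X_{i₁j₁}, …, v(G)·X_{iₗjₗ}) = Σ_{F ∈ 𝓕_l} i(F,G)·κ(F,J)`,
where `J` is the edge-labeled multigraph on `[k]` formed by the pairs `(i_p, j_p)`.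
The sum over the isomorphism classes `𝓕_l` of connected edge-labeled multigraphs with
`l` labeled edges and no isolated vertices is expressed as a sum over an arbitrary
transversal `R` of representatives (realized on vertex sets `Fin m`, `m ≤ 2l`). -/
theorem cumulant_eq_sum_counts
    (V : Type*) [Fintype V] (hV : Nonempty V) (G : SimpleGraph V)
    (k l : ℕ) (hk : 0 < k) (hl : 0 < l)
    (ij : Fin l → Fin k × Fin k)
    (R : Finset (Σ m : Fin (2 * l + 1), Fin l → Sym2 (Fin (m : ℕ))))
    (hgood : ∀ F ∈ R, GoodMG F.2)
    (htrans : ∀ (m : ℕ) (F : Fin l → Sym2 (Fin m)), GoodMG F →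
      ∃! F₀, F₀ ∈ R ∧ MGIso F F₀.2) :
    jointCumulantColor k (fun p (C : V → Fin k) =>
        (Fintype.card V : ℝ) *
          ((eCount G C (ij p).1 (ij p).2 : ℝ) / (Fintype.card V : ℝ))) =
      ∑ F ∈ R, (iCount F.2 G : ℝ) * kappaFJ F.2 (fun p => s((ij p).1, (ij p).2)) := by
  classical
  haveI : Nonempty V := hV
  have LHS1 : jointCumulantColor k (fun p (C : V → Fin k) =>
      (Fintype.card V : ℝ) * ((eCount G C (ij p).1 (ij p).2 : ℝ) / (Fintype.card V : ℝ)))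
      = ∑ P ∈ Finset.univ.filter (fun P : Finset (Finset (Fin l)) => IsSetPartition P),
        (-1:ℝ)^(P.card - 1) * (Nat.factorial (P.card - 1) : ℝ) *
          ∏ B ∈ P, colorExp k (fun C => ∏ p ∈ B, (eCount G C (ij p).1 (ij p).2 : ℝ)) := by
    simp only [jointCumulantColor]
    refine Finset.sum_congr rfl fun P _ => ?_
    congr 1
    refine Finset.prod_congr rfl fun B _ => ?_
    congr 1
    funext C
    refine Finset.prod_congr rfl fun p _ => ?_
    have hV0 : (Fintype.card V : ℝ) ≠ 0 := Nat.cast_ne_zero.2 Fintype.card_ne_zero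
    field_simp
  rw [LHS1, sumPartitions_eq_cumS (fun B => colorExp k
    (fun C => ∏ p ∈ B, (eCount G C (ij p).1 (ij p).2 : ℝ)))]
  simp only [cumS]
  set Efin := (Finset.univ : Finset (Fin l → Sym2 V)).filter
    (fun e => ∀ p, e p ∈ G.edgeFinset) with hEfin
  have hstep : ∀ P ∈ partsOf (Finset.univ : Finset (Fin l)),
      wP (fun B => colorExp k (fun C => ∏ p ∈ B, (eCount G C (ij p).1 (ij p).2 : ℝ))) P
      = ∑ e ∈ Efin, wP (fun B => (NfunD V (fun p => s((ij p).1, (ij p).2)) e B : ℝ)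
          / (k:ℝ)^(Fintype.card V)) P := by
    intro P hPm
    rw [wP, E1 G ij (mem_partsOf.1 hPm), Finset.mul_sum]
    exact Finset.sum_congr rfl fun e _ => rfl
  rw [Finset.sum_congr rfl hstep, Finset.sum_comm]
  have pere : ∀ e ∈ Efin,
      (∑ P ∈ partsOf (Finset.univ : Finset (Fin l)),
        wP (fun B => (NfunD V (fun p => s((ij p).1, (ij p).2)) e B : ℝ)
          / (k:ℝ)^(Fintype.card V)) P)
      = ∑ F₀ ∈ R, if (∃ φ : Fin (F₀.1 : ℕ) ↪ V, ∀ p, e p = Sym2.map φ (F₀.2 p))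
          then kappaFJ F₀.2 (fun p => s((ij p).1, (ij p).2)) else 0 := by
    intro e heE
    have hedge : ∀ p, e p ∈ G.edgeSet := by
      intro p
      have h := (Finset.mem_filter.1 heE).2 p
      rwa [SimpleGraph.mem_edgeFinset] at h
    have he : (MSupp e).Nonempty := by
      obtain ⟨a, ha⟩ := sym2_exists_mem (e ⟨0, hl⟩)
      exact ⟨a, mem_MSupp_of_mem ha⟩
    have hxv : ∀ B, (NfunD V (fun p => s((ij p).1, (ij p).2)) e B : ℝ)
          / (k:ℝ)^(Fintype.card V)
        = xVal (FmgE e he) B (fun p => s((ij p).1, (ij p).2)) :=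
      fun B => NfunD_xVal hk _ e he B
    have hcum : (∑ P ∈ partsOf (Finset.univ : Finset (Fin l)),
        wP (fun B => (NfunD V (fun p => s((ij p).1, (ij p).2)) e B : ℝ)
          / (k:ℝ)^(Fintype.card V)) P)
        = kappaFJ (FmgE e he) (fun p => s((ij p).1, (ij p).2)) := by
      rw [kappaFJ_eq_cumS]
      simp only [cumS]
      refine Finset.sum_congr rfl fun P _ => ?_
      simp only [wP]
      congr 1
      exact Finset.prod_congr rfl fun B _ => hxv B
    rw [hcum]
    have hniso := FmgE_no_isolated he
    have hndiag : ∀ p, ¬ (FmgE e he p).IsDiag :=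
      fun p => FmgE_not_isDiag he (G.not_isDiag_of_mem_edgeSet (hedge p))
    by_cases hgd : GoodMG (FmgE e he)
    · obtain ⟨F₀s, ⟨hF₀R, hF₀iso⟩, huq⟩ := htrans (mE e) (FmgE e he) hgd
      rw [kappaFJ_iso hF₀iso]
      have hz : ∀ F₁ ∈ R, F₁ ≠ F₀s →
          (if (∃ φ : Fin (F₁.1 : ℕ) ↪ V, ∀ p, e p = Sym2.map φ (F₁.2 p))
            then kappaFJ F₁.2 (fun p => s((ij p).1, (ij p).2)) else 0) = 0 := by
        intro F₁ hF₁ hne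
        rw [if_neg]
        intro hpred
        exact hne (huq F₁ ⟨hF₁, (pred_forward he (hgood F₁ hF₁) hpred).2⟩)
      rw [Finset.sum_eq_single_of_mem F₀s hF₀R hz, if_pos (pred_backward he hF₀iso)]
    · have h0 : kappaFJ (FmgE e he) (fun p => s((ij p).1, (ij p).2)) = 0 :=
        kappa_disconnected hk hl _ hniso hndiag (fun hc => hgd ⟨hniso, hndiag, hc⟩) _
      rw [h0]
      symm
      refine Finset.sum_eq_zero fun F₁ hF₁ => ?_
      rw [if_neg]
      intro hpred
      exact hgd (pred_forward he (hgood F₁ hF₁) hpred).1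
  rw [Finset.sum_congr rfl pere, Finset.sum_comm]
  refine Finset.sum_congr rfl fun F₀ hF₀ => ?_
  have hcard : (Efin.filter (fun e => ∃ φ : Fin (F₀.1 : ℕ) ↪ V,
      ∀ p, e p = Sym2.map φ (F₀.2 p))).card = iCount F₀.2 G := by
    simp only [iCount]
    rw [Nat.card_eq_fintype_card, Fintype.card_subtype]
    congr 1
    ext e
    simp only [hEfin, Finset.mem_filter, Finset.mem_univ, true_and,
      SimpleGraph.mem_edgeFinset]
  rw [← Finset.sum_filter, Finset.sum_const, nsmul_eq_mul, hcard]
end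

section
/- Let l be a positive integer and k ≥ 2l. Let E be the square matrix with rows and columns indexed by 𝓕*_l whose entry in column F and row J is x(F,J), where x(F,J) = E[∏_{p=1}^l Y_{i_p,j_p,f_p}] is computed by realizing J as a multigraph on [k] with edges (i_1,j_1),…,(i_l,j_l), taking a uniformly random coloring of V(F) by [k], letting f_1,…,f_l be the labeled edges of F, and letting Y_{i,j,e} be the indicator that the endpoints of e receive colors i and j. Then the matrix E is invertible; in particular, under any ordering of 𝓕*_l by a nondecreasing number of non-isolated vertices, E has nonzero diagonal entries and zero entries above the diagonal. -/
/-- `F : Fin l → Sym2 (Fin m)` represents a multigraph with `l` labeled edges on the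
vertex set `Fin m`. `GoodMGStar F` says that it is a member of `𝓕*_l`: no isolated
vertices and no loops (connectivity is not required). -/
def GoodMGStar {l m : ℕ} (F : Fin l → Sym2 (Fin m)) : Prop :=
  (∀ v : Fin m, ∃ p, v ∈ F p) ∧ (∀ p, ¬ (F p).IsDiag)

/-- The matrix with rows indexed by `J` and columns indexed by `F` (both running over
a transversal `R` of `𝓕*_l`) whose `(J, F)` entry is `x(F, J)`, where `J` is realized
as a multigraph on `[k]` via the injection `ψ J`. -/
noncomputable def xMatrix {l : ℕ} (k : ℕ)
    (R : Finset (Σ m : Fin (2 * l + 1), Fin l → Sym2 (Fin (m : ℕ))))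
    (ψ : ∀ F : (Σ m : Fin (2 * l + 1), Fin l → Sym2 (Fin (m : ℕ))),
      Fin (F.1 : ℕ) ↪ Fin k) :
    Matrix ↥R ↥R ℝ :=
  fun J F => xVal F.1.2 Finset.univ (fun p => Sym2.map (ψ J.1) (J.1.2 p))

/-- If `J` has more vertices than `F`, or the same number but is not isomorphic to `F`,
then no coloring of the vertices of `F` realizes the edges of `J` (via `ψ`). -/
lemma no_coloring {l mF mJ k : ℕ} (F : Fin l → Sym2 (Fin mF)) (J : Fin l → Sym2 (Fin mJ))
    (ψ : Fin mJ ↪ Fin k) (hJ : GoodMGStar J)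
    (h : mF < mJ ∨ (mF = mJ ∧ ¬ MGIso F J)) :
    ¬ ∃ c : Fin mF → Fin k, ∀ p, Sym2.map c (F p) = Sym2.map ψ (J p) := by
  rintro ⟨c, hc⟩
  have hex : ∀ v : Fin mJ, ∃ w : Fin mF, c w = ψ v := by
    intro v
    obtain ⟨p, hp⟩ := hJ.1 v
    have hm : ψ v ∈ Sym2.map c (F p) := by
      rw [hc p]; exact Sym2.mem_map.2 ⟨v, hp, rfl⟩
    obtain ⟨w, _, hw⟩ := Sym2.mem_map.1 hm
    exact ⟨w, hw⟩
  choose g hg using hex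
  have hginj : Function.Injective g := by
    intro a b hab
    apply ψ.injective
    rw [← hg a, ← hg b, hab]
  have hle : mJ ≤ mF := by
    simpa using Fintype.card_le_of_injective g hginj
  rcases h with h | ⟨heq, hiso⟩
  · omega
  · apply hiso
    have hbij : Function.Bijective g :=
      (Fintype.bijective_iff_injective_and_card g).2 ⟨hginj, by simp [heq]⟩
    let e := Equiv.ofBijective g hbij
    refine ⟨e.symm, fun p => ?_⟩
    have hcomp : ∀ w, c w = ψ (e.symm w) := by
      intro w
      conv_lhs => rw [← e.apply_symm_apply w]
      exact hg (e.symm w)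
    apply Sym2.map.injective ψ.injective
    rw [Sym2.map_map, ← hc p]
    exact congrFun (congrArg Sym2.map (funext fun w => (hcomp w).symm)) (F p)

/-- for `k ≥ 2l`, the matrix `E = (x(F, J))_{J, F ∈ 𝓕*_l}` is
invertible; in particular (which is the reason for invertibility) its entries vanish
whenever `J` has more (non-isolated) vertices than `F`, or both have the same number
of vertices but are not isomorphic, while its diagonal entries are nonzero — i.e. it
is triangular with nonzero diagonal under any ordering of `𝓕*_l` by a nondecreasing
number of non-isolated vertices.  The isomorphism classes `𝓕*_l` are represented by an
arbitrary transversal `R` of representatives on vertex sets `Fin m`, `m ≤ 2l`. -/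
theorem xMatrix_invertible
    (l k : ℕ) (hl : 0 < l) (hk : 2 * l ≤ k)
    (R : Finset (Σ m : Fin (2 * l + 1), Fin l → Sym2 (Fin (m : ℕ))))
    (hgood : ∀ F ∈ R, GoodMGStar F.2)
    (htrans : ∀ (m : ℕ) (F : Fin l → Sym2 (Fin m)), GoodMGStar F →
      ∃! F₀, F₀ ∈ R ∧ MGIso F F₀.2)
    (ψ : ∀ F : (Σ m : Fin (2 * l + 1), Fin l → Sym2 (Fin (m : ℕ))),
      Fin (F.1 : ℕ) ↪ Fin k) :
    IsUnit (xMatrix k R ψ).det ∧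
    (∀ J F : ↥R, ((F.1.1 : ℕ) < (J.1.1 : ℕ) ∨
        ((F.1.1 : ℕ) = (J.1.1 : ℕ) ∧ ¬ MGIso F.1.2 J.1.2)) →
      xMatrix k R ψ J F = 0) ∧
    (∀ F : ↥R, xMatrix k R ψ F F ≠ 0) := by
  have hkpos : (0 : ℝ) < k := by
    have : 2 ≤ k := le_trans (by omega) hk
    positivity
  -- Part 2: vanishing above the diagonal
  have hzero : ∀ J F : ↥R, ((F.1.1 : ℕ) < (J.1.1 : ℕ) ∨
      ((F.1.1 : ℕ) = (J.1.1 : ℕ) ∧ ¬ MGIso F.1.2 J.1.2)) →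
      xMatrix k R ψ J F = 0 := by
    intro J F h
    have hno := no_coloring F.1.2 J.1.2 (ψ J.1) (hgood J.1 J.2) h
    have hempty : IsEmpty {c : Fin (F.1.1 : ℕ) → Fin k //
        ∀ p ∈ Finset.univ, Sym2.map c (F.1.2 p) = Sym2.map (ψ J.1) (J.1.2 p)} := by
      constructor
      rintro ⟨c, hc⟩
      exact hno ⟨c, fun p => hc p (Finset.mem_univ p)⟩
    have hcard : Nat.card {c : Fin (F.1.1 : ℕ) → Fin k //
        ∀ p ∈ Finset.univ, Sym2.map c (F.1.2 p) = Sym2.map (ψ J.1) (J.1.2 p)} = 0 :=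
      @Nat.card_of_isEmpty _ hempty
    unfold xMatrix xVal
    rw [hcard]
    simp
  -- Part 3: positive diagonal
  have hdiag : ∀ F : ↥R, xMatrix k R ψ F F ≠ 0 := by
    intro F
    have hne : Nonempty {c : Fin (F.1.1 : ℕ) → Fin k //
        ∀ p ∈ Finset.univ, Sym2.map c (F.1.2 p) = Sym2.map (ψ F.1) (F.1.2 p)} :=
      ⟨⟨ψ F.1, fun _ _ => rfl⟩⟩
    have hpos : 0 < Nat.card {c : Fin (F.1.1 : ℕ) → Fin k //
        ∀ p ∈ Finset.univ, Sym2.map c (F.1.2 p) = Sym2.map (ψ F.1) (F.1.2 p)} :=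
      @Nat.card_pos _ hne (Subtype.finite)
    have : 0 < xMatrix k R ψ F F := by
      unfold xMatrix xVal
      apply div_pos
      · exact_mod_cast hpos
      · positivity
    exact ne_of_gt this
  refine ⟨?_, hzero, hdiag⟩
  -- Part 1: determinant is a unit
  classical
  -- an injective map into Lex (ℕ × ℕ): first coordinate m, second arbitrary tiebreak
  set b : ↥R → Lex (ℕ × ℕ) :=
    fun F => toLex ((F.1.1 : ℕ), ((Fintype.equivFin ↥R) F : ℕ)) with hb
  have hbinj : Function.Injective b := by
    intro x y hxy
    have h2 := congrArg (fun z => (ofLex z).2) hxy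
    simp only [b, ofLex_toLex] at h2
    exact (Fintype.equivFin ↥R).injective (Fin.val_injective h2)
  letI LO : LinearOrder ↥R := LinearOrder.lift' b hbinj
  have hdet := Matrix.det_of_isUpperTriangular (M := xMatrix k R ψ)
    (by
      intro J F hlt
      have hblt : b F < b J := hlt
      rw [hb] at hblt
      rcases Prod.lex_def.1 hblt with hmlt | ⟨hmeq, henc⟩
      · exact hzero J F (Or.inl hmlt)
      · refine hzero J F (Or.inr ⟨hmeq, ?_⟩)
        intro hiso
        have hFne : F ≠ J := by rintro rfl; exact lt_irrefl _ henc
        obtain ⟨F₀, _, huniq⟩ := htrans _ F.1.2 (hgood F.1 F.2)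
        have h1 : F.1 = F₀ := huniq F.1 ⟨F.2, Equiv.refl _, fun p => by simp⟩
        have h2 : J.1 = F₀ := huniq J.1 ⟨J.2, hiso⟩
        exact hFne (Subtype.ext (h1.trans h2.symm)))
  rw [hdet, isUnit_iff_ne_zero]
  exact Finset.prod_ne_zero_iff.2 fun F _ => hdiag F
end
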